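/- arXiv:1704.00652 — 6 statements merged into one kernel-verified Lean document; each statement's English description precedes it below -/
import Mathlib

section
/- Let G be a finite simple graph, let k ≥ 1, and let H be a subgroup of the automorphism group of G. Suppose c₁ and c₂ are proper k-colorings of G with c₂ = σ ∘ c₁ ∘ φ for some permutation σ of {1,…,k} and some φ ∈ H. Let Q be a partition of V(G) into independent sets and let [Q]_H = { ψ(Q) : ψ ∈ H } be its H-orbit, where ψ(Q) is the partition whose blocks are the ψ-images of the blocks of Q. Then the number of proper k-colorings of G □ P₂ whose layer-1 coloring equals c₁ and whose layer-2 kernel partition lies in [Q]_H equals the number of proper k-colorings of G □ P₂ whose layer-1 coloring equals c₂ and whose layer-2 kernel partition lies in [Q]_H. -/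
open SimpleGraph

private lemma aux_map {V : Type*} [Fintype V] [DecidableEq V]
    (G : SimpleGraph V) (k : ℕ)
    (H : Subgroup (G ≃g G))
    (σ : Equiv.Perm (Fin k)) (φ : G ≃g G) (hφ : φ ∈ H)
    (Q : Setoid V) (c₀ : V → Fin k) (c : V × Fin 2 → Fin k)
    (hc : (∀ a b, (G.boxProd (pathGraph 2)).Adj a b → c a ≠ c b) ∧
        (∀ v, c (v, 0) = c₀ v) ∧
        (∃ ψ : G ≃g G, ψ ∈ H ∧
          Setoid.ker (fun v => c (v, 1)) = Setoid.comap (⇑ψ) Q)) :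
    (∀ a b, (G.boxProd (pathGraph 2)).Adj a b →
        (fun p : V × Fin 2 => σ (c (φ p.1, p.2))) a ≠
        (fun p : V × Fin 2 => σ (c (φ p.1, p.2))) b) ∧
    (∀ v, (fun p : V × Fin 2 => σ (c (φ p.1, p.2))) (v, 0) = σ (c₀ (φ v))) ∧
    (∃ ψ : G ≃g G, ψ ∈ H ∧
      Setoid.ker (fun v => (fun p : V × Fin 2 => σ (c (φ p.1, p.2))) (v, 1)) =
        Setoid.comap (⇑ψ) Q) := by
  obtain ⟨hproper, h0, ψ, hψ, hker⟩ := hc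
  refine ⟨?_, ?_, φ.trans ψ, ?_, ?_⟩
  · intro a b hab
    simp only [ne_eq, σ.injective.eq_iff]
    apply hproper
    rw [SimpleGraph.boxProd_adj] at hab ⊢
    rcases hab with ⟨h, he⟩ | ⟨h, he⟩
    · exact Or.inl ⟨φ.map_adj_iff.2 h, he⟩
    · exact Or.inr ⟨h, by simp [he]⟩
  · intro v
    simp [h0]
  · exact (show φ.trans ψ = ψ * φ from rfl) ▸ H.mul_mem hψ hφ
  · ext x y
    have := Setoid.ext_iff.1 hker (φ x) (φ y)
    simp only [Setoid.ker_def, σ.injective.eq_iff] at *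
    rw [this]
    rfl

/-- The entry of the compactified transfer matrix is independent of the
choice of representative: if `c₂ = σ ∘ c₁ ∘ φ` for a permutation `σ` of the colors and
`φ` in a subgroup `H` of the automorphism group of `G`, then the number of proper
`k`-colorings of `G □ P₂` with layer-1 coloring `c₁` (resp. `c₂`) and layer-2 kernel
partition in the `H`-orbit of `Q` is the same. -/
theorem transfer_entry_well_defined {V : Type*} [Fintype V] [DecidableEq V]
    (G : SimpleGraph V) (k : ℕ) (hk : 1 ≤ k)
    (H : Subgroup (G ≃g G))
    (c₁ c₂ : V → Fin k)
    (h₁ : ∀ u v, G.Adj u v → c₁ u ≠ c₁ v)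
    (h₂ : ∀ u v, G.Adj u v → c₂ u ≠ c₂ v)
    (σ : Equiv.Perm (Fin k)) (φ : G ≃g G) (hφ : φ ∈ H)
    (hc₂ : c₂ = fun v => σ (c₁ (φ v)))
    (Q : Setoid V) (hQ : ∀ u v, Q.r u v → ¬ G.Adj u v) :
    Nat.card {c : V × Fin 2 → Fin k //
        (∀ a b, (G.boxProd (pathGraph 2)).Adj a b → c a ≠ c b) ∧
        (∀ v, c (v, 0) = c₁ v) ∧
        (∃ ψ : G ≃g G, ψ ∈ H ∧
          Setoid.ker (fun v => c (v, 1)) = Setoid.comap (⇑ψ) Q)} =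
    Nat.card {c : V × Fin 2 → Fin k //
        (∀ a b, (G.boxProd (pathGraph 2)).Adj a b → c a ≠ c b) ∧
        (∀ v, c (v, 0) = c₂ v) ∧
        (∃ ψ : G ≃g G, ψ ∈ H ∧
          Setoid.ker (fun v => c (v, 1)) = Setoid.comap (⇑ψ) Q)} := by
  have hφ' : φ.symm ∈ H := (show φ.symm = φ⁻¹ from rfl) ▸ H.inv_mem hφ
  apply Nat.card_congr
  refine
    { toFun := fun c => ⟨fun p => σ (c.1 (φ p.1, p.2)), ?_⟩
      invFun := fun c => ⟨fun p => σ.symm (c.1 (φ.symm p.1, p.2)), ?_⟩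
      left_inv := ?_
      right_inv := ?_ }
  · have := aux_map G k H σ φ hφ Q c₁ c.1 c.2
    refine ⟨this.1, fun v => ?_, this.2.2⟩
    rw [hc₂]; exact this.2.1 v
  · have := aux_map G k H σ.symm φ.symm hφ' Q c₂ c.1 c.2
    refine ⟨this.1, fun v => ?_, this.2.2⟩
    rw [this.2.1 v, hc₂]; simp
  · intro c; ext p; simp
  · intro c; ext p; simp
end

section
/- Let G be a finite simple graph, let k ≥ 1, let P and Q be partitions of V(G) into independent sets, and let c₀ be any proper k-coloring of G with kernel partition P. Then the number of proper k-colorings of G □ P₂ whose layer-1 kernel partition equals P and whose layer-2 kernel partition equals Q is equal to (the number of proper k-colorings of G with kernel partition P) times (the number of proper k-colorings of G □ P₂ whose layer-1 coloring equals c₀ and whose layer-2 kernel partition equals Q). -/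
open SimpleGraph

private lemma ker_comp_injective {α β γ : Type*} {g : β → γ} (hg : Function.Injective g)
    (f : α → β) : Setoid.ker (fun a => g (f a)) = Setoid.ker f := by
  ext a b
  exact ⟨fun h => hg h, fun h => congrArg g h⟩

private lemma exists_perm {V : Type*} {k : ℕ} {c₀ c₁ : V → Fin k}
    (h : Setoid.ker c₀ = Setoid.ker c₁) :
    ∃ π : Equiv.Perm (Fin k), ∀ v, π (c₀ v) = c₁ v := by
  classical
  have key : ∀ v w, c₀ v = c₀ w ↔ c₁ v = c₁ w := fun v w => Setoid.ext_iff.mp h v w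
  let e : Set.range c₀ ≃ Set.range c₁ :=
  { toFun := fun x => ⟨c₁ x.2.choose, Set.mem_range_self _⟩
    invFun := fun x => ⟨c₀ x.2.choose, Set.mem_range_self _⟩
    left_inv := by
      rintro ⟨x, hx⟩
      have h1 : c₀ hx.choose = x := hx.choose_spec
      have h2 : c₁ (Set.mem_range_self (f := c₁) hx.choose : c₁ hx.choose ∈ Set.range c₁).choose
          = c₁ hx.choose := (Set.mem_range_self (f := c₁) hx.choose).choose_spec
      exact Subtype.ext (((key _ _).mpr h2).trans h1)
    right_inv := by
      rintro ⟨x, hx⟩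
      have h1 : c₁ hx.choose = x := hx.choose_spec
      have h2 : c₀ (Set.mem_range_self (f := c₀) hx.choose : c₀ hx.choose ∈ Set.range c₀).choose
          = c₀ hx.choose := (Set.mem_range_self (f := c₀) hx.choose).choose_spec
      exact Subtype.ext (((key _ _).mp h2).trans h1) }
  have hcard : Fintype.card {x // ¬ x ∈ Set.range c₀} = Fintype.card {x // ¬ x ∈ Set.range c₁} := by
    rw [Fintype.card_subtype_compl, Fintype.card_subtype_compl]
    congr 1
    exact Fintype.card_congr e
  let e' : {x // ¬ x ∈ Set.range c₀} ≃ {x // ¬ x ∈ Set.range c₁} := Fintype.equivOfCardEq hcard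
  refine ⟨(Equiv.sumCompl (· ∈ Set.range c₀)).symm.trans
      ((e.sumCongr e').trans (Equiv.sumCompl (· ∈ Set.range c₁))), fun v => ?_⟩
  have hm : c₀ v ∈ Set.range c₀ := Set.mem_range_self v
  simp only [Equiv.trans_apply, Equiv.sumCompl_symm_apply_of_pos hm, Equiv.sumCongr_apply,
    Sum.map_inl, Equiv.sumCompl_apply_inl]
  exact (key _ _).mp hm.choose_spec

private lemma box_proper_iff {V : Type*} (G : SimpleGraph V) {k : ℕ} (c : V × Fin 2 → Fin k) :
    (∀ a b, (G.boxProd (pathGraph 2)).Adj a b → c a ≠ c b) ↔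
    ((∀ u v, G.Adj u v → c (u,0) ≠ c (v,0)) ∧
     (∀ u v, G.Adj u v → c (u,1) ≠ c (v,1)) ∧
     ∀ v, c (v,0) ≠ c (v,1)) := by
  constructor
  · intro h
    exact ⟨fun u v huv => h (u,0) (v,0) (by simp [boxProd_adj, huv]),
      fun u v huv => h (u,1) (v,1) (by simp [boxProd_adj, huv]),
      fun v => h (v,0) (v,1) (by simp [boxProd_adj, pathGraph_adj])⟩
  · rintro ⟨h0, h1, hc⟩ ⟨a, i⟩ ⟨b, j⟩ hadj
    rw [boxProd_adj] at hadj
    rcases hadj with ⟨hG, hij⟩ | ⟨hp, hab⟩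
    · simp only at hij
      subst hij
      fin_cases i
      · exact h0 _ _ hG
      · exact h1 _ _ hG
    · simp only at hab
      subst hab
      rw [pathGraph_adj] at hp
      fin_cases i <;> fin_cases j <;> simp_all
      exact fun h => hc a h.symm

/-- The number of proper `k`-colorings of `G □ P₂` with layer-1 kernel
partition `P` and layer-2 kernel partition `Q` factors as (number of proper
`k`-colorings of `G` with kernel partition `P`) times (number of such colorings with
layer-1 coloring equal to a fixed representative `c₀`). -/
theorem transfer_entry_orbit_factorization {V : Type*} [Fintype V] [DecidableEq V]
    (G : SimpleGraph V) (k : ℕ) (hk : 1 ≤ k)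
    (P Q : Setoid V)
    (hP : ∀ u v, P.r u v → ¬ G.Adj u v)
    (hQ : ∀ u v, Q.r u v → ¬ G.Adj u v)
    (c₀ : V → Fin k)
    (hc₀proper : ∀ u v, G.Adj u v → c₀ u ≠ c₀ v)
    (hc₀ker : Setoid.ker c₀ = P) :
    Nat.card {c : V × Fin 2 → Fin k //
        (∀ a b, (G.boxProd (pathGraph 2)).Adj a b → c a ≠ c b) ∧
        Setoid.ker (fun v => c (v, 0)) = P ∧
        Setoid.ker (fun v => c (v, 1)) = Q} =
    Nat.card {c : V → Fin k //
        (∀ u v, G.Adj u v → c u ≠ c v) ∧ Setoid.ker c = P} *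
    Nat.card {c : V × Fin 2 → Fin k //
        (∀ a b, (G.boxProd (pathGraph 2)).Adj a b → c a ≠ c b) ∧
        (∀ v, c (v, 0) = c₀ v) ∧
        Setoid.ker (fun v => c (v, 1)) = Q} := by
  classical
  -- fiber type
  set F2 : (V → Fin k) → Type _ := fun c₁ =>
    {c₂ : V → Fin k // (∀ u v, G.Adj u v → c₂ u ≠ c₂ v) ∧ Setoid.ker c₂ = Q ∧
      ∀ v, c₁ v ≠ c₂ v} with hF2
  set S2 : Type _ := {c : V → Fin k // (∀ u v, G.Adj u v → c u ≠ c v) ∧ Setoid.ker c = P}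
    with hS2
  -- Equiv 1 : LHS ≃ Σ c₁ : S2, F2 c₁.1
  have E1 : {c : V × Fin 2 → Fin k //
        (∀ a b, (G.boxProd (pathGraph 2)).Adj a b → c a ≠ c b) ∧
        Setoid.ker (fun v => c (v, 0)) = P ∧
        Setoid.ker (fun v => c (v, 1)) = Q} ≃ Σ c₁ : S2, F2 c₁.1 := by
    refine ⟨fun c => ⟨⟨fun v => c.1 (v,0), ((box_proper_iff G c.1).mp c.2.1).1, c.2.2.1⟩,
        ⟨fun v => c.1 (v,1), ((box_proper_iff G c.1).mp c.2.1).2.1, c.2.2.2,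
          fun v => ((box_proper_iff G c.1).mp c.2.1).2.2 v⟩⟩,
      fun p => ⟨fun x => if x.2 = 0 then p.1.1 x.1 else p.2.1 x.1, ?_, ?_, ?_⟩, ?_, ?_⟩
    · rw [box_proper_iff]
      refine ⟨?_, ?_, ?_⟩ <;> simp only [if_pos rfl, if_neg (by decide : ¬ (1:Fin 2) = 0)]
      · exact p.1.2.1
      · exact p.2.2.1
      · exact p.2.2.2.2
    · simpa only [if_pos rfl, ↓reduceIte] using p.1.2.2
    · simpa only [if_neg (by decide : ¬ (1:Fin 2) = 0)] using p.2.2.2.1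
    · intro c
      refine Subtype.ext (funext fun x => ?_)
      obtain ⟨v, i⟩ := x
      fin_cases i <;> rfl
    · intro p
      rfl
  -- Equiv: RHS second factor ≃ F2 c₀
  have E3 : {c : V × Fin 2 → Fin k //
        (∀ a b, (G.boxProd (pathGraph 2)).Adj a b → c a ≠ c b) ∧
        (∀ v, c (v, 0) = c₀ v) ∧
        Setoid.ker (fun v => c (v, 1)) = Q} ≃ F2 c₀ := by
    refine ⟨fun c => ⟨fun v => c.1 (v,1), ((box_proper_iff G c.1).mp c.2.1).2.1, c.2.2.2,
        fun v => c.2.2.1 v ▸ ((box_proper_iff G c.1).mp c.2.1).2.2 v⟩,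
      fun c₂ => ⟨fun x => if x.2 = 0 then c₀ x.1 else c₂.1 x.1, ?_, ?_, ?_⟩, ?_, ?_⟩
    · rw [box_proper_iff]
      refine ⟨?_, ?_, ?_⟩ <;> simp only [if_pos rfl, if_neg (by decide : ¬ (1:Fin 2) = 0)]
      · exact hc₀proper
      · exact c₂.2.1
      · exact c₂.2.2.2
    · intro v; simp
    · simpa only [if_neg (by decide : ¬ (1:Fin 2) = 0)] using c₂.2.2.1
    · intro c
      refine Subtype.ext (funext fun x => ?_)
      obtain ⟨v, i⟩ := x
      fin_cases i
      · exact (c.2.2.1 v).symm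
      · rfl
    · intro c₂
      rfl
  -- fibers are all equivalent to F2 c₀
  have fib : ∀ c₁ : S2, F2 c₁.1 ≃ F2 c₀ := by
    intro c₁
    have hkk : Setoid.ker c₀ = Setoid.ker c₁.1 := hc₀ker.trans c₁.2.2.symm
    let π := (exists_perm hkk).choose
    have hπ : ∀ v, π (c₀ v) = c₁.1 v := (exists_perm hkk).choose_spec
    refine ⟨fun c₂ => ⟨fun v => π.symm (c₂.1 v), fun u v h h' => c₂.2.1 u v h (π.symm.injective h'),
        (ker_comp_injective π.symm.injective c₂.1).trans c₂.2.2.1, fun v h => c₂.2.2.2 v ?_⟩,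
      fun c₂ => ⟨fun v => π (c₂.1 v), fun u v h h' => c₂.2.1 u v h (π.injective h'),
        (ker_comp_injective π.injective c₂.1).trans c₂.2.2.1, fun v h => c₂.2.2.2 v ?_⟩,
      fun c₂ => Subtype.ext (funext fun v => by simp), fun c₂ => Subtype.ext (funext fun v => by simp)⟩
    · rw [← hπ v, h]; simp
    · exact π.injective ((hπ v).trans h)
  have E : {c : V × Fin 2 → Fin k //
        (∀ a b, (G.boxProd (pathGraph 2)).Adj a b → c a ≠ c b) ∧
        Setoid.ker (fun v => c (v, 0)) = P ∧
        Setoid.ker (fun v => c (v, 1)) = Q} ≃ S2 × F2 c₀ :=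
    E1.trans ((Equiv.sigmaCongrRight fib).trans (Equiv.sigmaEquivProd S2 (F2 c₀)))
  rw [Nat.card_congr E, Nat.card_prod, Nat.card_congr E3]
end

section
/- Let G be a finite simple graph on vertex set V with N = |V|, let P and Q be partitions of V into independent sets of G, and let c₀ : V → {1,…,N} be a proper coloring of G with kernel partition P. Then there exists a monic integer polynomial p whose degree equals the number of blocks of Q such that for every integer k ≥ N, p(k) equals the number of proper k-colorings of G □ P₂ whose layer-1 coloring equals c₀ and whose layer-2 kernel partition equals Q. -/
open SimpleGraph

private lemma nat_card_sigma' {ι : Type*} [Fintype ι] {β : ι → Type*} [∀ i, Finite (β i)] :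
    Nat.card (Σ i, β i) = ∑ i, Nat.card (β i) := by
  haveI := fun i => Fintype.ofFinite (β i)
  simp [Nat.card_eq_fintype_card, Fintype.card_sigma]

private lemma prod_desc (d m : ℕ) :
    (∏ i ∈ Finset.range m, ((d : ℤ) - i)) = (d.descFactorial m : ℤ) := by
  induction m with
  | zero => simp
  | succ m ih =>
    rw [Finset.prod_range_succ, ih, Nat.descFactorial_succ]
    rcases le_or_gt m d with h | h
    · have : ((d - m : ℕ) : ℤ) = (d : ℤ) - m := by exact_mod_cast Int.ofNat_sub h
      push_cast
      rw [this]; ring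
    · have h1 : d.descFactorial m = 0 := Nat.descFactorial_eq_zero_iff_lt.2 h
      simp [h1]

/-- The key counting lemma: the number of injective functions `α → [1,k]` avoiding
prescribed forbidden sets (contained in `[1,N]`) is, for `k ≥ N`, given by a monic
integer polynomial of degree `card α`. -/
private lemma count_inj_avoid {α : Type*} [Fintype α] [DecidableEq α] (N : ℕ)
    (F : α → Finset ℕ) (hF : ∀ a, F a ⊆ Finset.Icc 1 N) :
    ∃ p : Polynomial ℤ, p.Monic ∧ p.natDegree = Fintype.card α ∧
      ∀ k : ℕ, N ≤ k →
        p.eval (k : ℤ) = (Nat.card {f : α → ℕ // Function.Injective f ∧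
          (∀ a, f a ∈ Finset.Icc 1 k) ∧ (∀ a, f a ∉ F a)} : ℤ) := by
  classical
  set n := Fintype.card α with hn
  -- the coefficient counts (independent of k)
  set A : Finset α → ℕ := fun T =>
    Nat.card {g : {a // a ∈ T} → ℕ // Function.Injective g ∧
      ∀ a, g a ∈ Finset.Icc 1 N ∧ g a ∉ F a.1} with hA
  have hA0 : A ∅ = 1 := by
    rw [hA]
    rw [Nat.card_eq_one_iff_unique]
    constructor
    · constructor
      intro x y
      apply Subtype.ext
      funext a
      exact absurd a.2 (Finset.notMem_empty a.1)
    · exact ⟨⟨fun a => absurd a.2 (Finset.notMem_empty a.1),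
        fun a => absurd a.2 (Finset.notMem_empty a.1),
        fun a => absurd a.2 (Finset.notMem_empty a.1)⟩⟩
  set q : ℕ → Polynomial ℤ := fun m =>
    ∏ i ∈ Finset.range m, (Polynomial.X - Polynomial.C ((N : ℤ) + i)) with hq
  have hqmonic : ∀ m, (q m).Monic := fun m =>
    Polynomial.monic_prod_of_monic _ _ fun i _ => Polynomial.monic_X_sub_C _
  have hqnat : ∀ m, (q m).natDegree = m := by
    intro m
    rw [hq]
    rw [Polynomial.natDegree_prod_of_monic _ _ (fun i _ => Polynomial.monic_X_sub_C _)]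
    have : ∀ i ∈ Finset.range m, (Polynomial.X - Polynomial.C ((N : ℤ) + i)).natDegree = 1 :=
      fun i _ => Polynomial.natDegree_X_sub_C _
    rw [Finset.sum_congr rfl this, Finset.sum_const, Finset.card_range, smul_eq_mul, mul_one]
  have hqdeg : ∀ m, (q m).degree = m := by
    intro m
    rw [Polynomial.degree_eq_natDegree (hqmonic m).ne_zero, hqnat]
  set p : Polynomial ℤ := ∑ T ∈ (Finset.univ : Finset (Finset α)),
      Polynomial.C (A T : ℤ) * q (n - T.card) with hp
  have hsplit : p = q n + ∑ T ∈ (Finset.univ : Finset (Finset α)).erase ∅,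
      Polynomial.C (A T : ℤ) * q (n - T.card) := by
    rw [hp, ← Finset.add_sum_erase _ _ (Finset.mem_univ ∅)]
    simp [hA0]
  have hrestdeg : (∑ T ∈ (Finset.univ : Finset (Finset α)).erase ∅,
      Polynomial.C (A T : ℤ) * q (n - T.card)).degree < (q n).degree := by
    rw [hqdeg]
    refine lt_of_le_of_lt (Polynomial.degree_sum_le _ _) ?_
    rw [Finset.sup_lt_iff (by exact WithBot.bot_lt_coe n)]
    intro T hT
    have hT' : T ≠ ∅ := (Finset.mem_erase.1 hT).1
    have hTc : 1 ≤ T.card := Finset.card_pos.2 (Finset.nonempty_iff_ne_empty.2 hT')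
    have hTn : T.card ≤ n := by rw [hn]; exact Finset.card_le_univ T
    calc (Polynomial.C (A T : ℤ) * q (n - T.card)).degree
        ≤ (Polynomial.C (A T : ℤ)).degree + (q (n - T.card)).degree :=
          Polynomial.degree_mul_le _ _
      _ ≤ 0 + (q (n - T.card)).degree := by
          gcongr
          exact Polynomial.degree_C_le
      _ = ((n - T.card : ℕ) : WithBot ℕ) := by rw [zero_add, hqdeg]
      _ < (n : WithBot ℕ) := by
          exact_mod_cast Nat.sub_lt (lt_of_lt_of_le hTc hTn) hTc
  have hpm : p.Monic := by
    rw [hsplit]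
    exact (hqmonic n).add_of_left hrestdeg
  have hpdeg : p.natDegree = n := by
    apply Polynomial.natDegree_eq_of_degree_eq_some
    rw [hsplit, Polynomial.degree_add_eq_left_of_degree_lt hrestdeg, hqdeg]
  refine ⟨p, hpm, hpdeg, ?_⟩
  intro k hk
  -- the counting identity
  set S := {f : α → ℕ // Function.Injective f ∧
      (∀ a, f a ∈ Finset.Icc 1 k) ∧ (∀ a, f a ∉ F a)} with hS
  haveI : Finite S := by
    apply Finite.of_injective (fun f : S => fun a : α =>
      (⟨f.1 a, Nat.lt_succ_of_le (Finset.mem_Icc.1 (f.2.2.1 a)).2⟩ : Fin (k+1)))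
    intro f g h
    apply Subtype.ext
    funext a
    exact congrArg Fin.val (congrFun h a)
  set Tmap : S → Finset α := fun f => Finset.univ.filter (fun a => f.1 a ≤ N) with hTmap
  -- fiber equivalence
  have fiberEquiv : ∀ T : Finset α, {f : S // Tmap f = T} ≃
      ({g : {a // a ∈ T} → ℕ // Function.Injective g ∧
        ∀ a, g a ∈ Finset.Icc 1 N ∧ g a ∉ F a.1} ×
       {h : {a // a ∈ Tᶜ} → ℕ // Function.Injective h ∧
        ∀ a, h a ∈ Finset.Icc (N+1) k}) := by
    intro T
    have memT : ∀ (f : S), Tmap f = T → ∀ (a : α), a ∈ T ↔ f.1 a ≤ N := by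
      intro f hf a
      rw [← hf, hTmap]
      simp
    refine ⟨?_, ?_, ?_, ?_⟩
    · intro f
      refine ⟨⟨fun a => f.1.1 a.1, ?_, ?_⟩, ⟨fun a => f.1.1 a.1, ?_, ?_⟩⟩
      · intro a b hab
        exact Subtype.ext (f.1.2.1 hab)
      · intro a
        refine ⟨Finset.mem_Icc.2 ⟨(Finset.mem_Icc.1 (f.1.2.2.1 a.1)).1,
          (memT f.1 f.2 a.1).1 a.2⟩, f.1.2.2.2 a.1⟩
      · intro a b hab
        exact Subtype.ext (f.1.2.1 hab)
      · intro a
        have ha : ¬ a.1 ∈ T := Finset.mem_compl.1 a.2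
        rw [memT f.1 f.2 a.1] at ha
        show f.1.1 a.1 ∈ Finset.Icc (N+1) k
        exact Finset.mem_Icc.2 ⟨by omega, (Finset.mem_Icc.1 (f.1.2.2.1 a.1)).2⟩
    · rintro ⟨g, h⟩
      refine ⟨⟨fun a => if ha : a ∈ T then g.1 ⟨a, ha⟩ else h.1 ⟨a, Finset.mem_compl.2 ha⟩,
        ?_, ?_, ?_⟩, ?_⟩
      · intro a b hab
        simp only at hab
        by_cases ha : a ∈ T <;> by_cases hb : b ∈ T
        · rw [dif_pos ha, dif_pos hb] at hab
          exact congrArg Subtype.val (g.2.1 hab)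
        · exfalso
          rw [dif_pos ha, dif_neg hb] at hab
          have h1 := (Finset.mem_Icc.1 (g.2.2 ⟨a, ha⟩).1).2
          have h2 := (Finset.mem_Icc.1 (h.2.2 ⟨b, Finset.mem_compl.2 hb⟩)).1
          omega
        · exfalso
          rw [dif_neg ha, dif_pos hb] at hab
          have h1 := (Finset.mem_Icc.1 (g.2.2 ⟨b, hb⟩).1).2
          have h2 := (Finset.mem_Icc.1 (h.2.2 ⟨a, Finset.mem_compl.2 ha⟩)).1
          omega
        · rw [dif_neg ha, dif_neg hb] at hab
          exact congrArg Subtype.val (h.2.1 hab)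
      · intro a
        by_cases ha : a ∈ T
        · simp only [dif_pos ha]
          have := Finset.mem_Icc.1 (g.2.2 ⟨a, ha⟩).1
          exact Finset.mem_Icc.2 ⟨this.1, le_trans this.2 hk⟩
        · simp only [dif_neg ha]
          have := Finset.mem_Icc.1 (h.2.2 ⟨a, Finset.mem_compl.2 ha⟩)
          exact Finset.mem_Icc.2 ⟨by omega, this.2⟩
      · intro a
        by_cases ha : a ∈ T
        · simp only [dif_pos ha]
          exact (g.2.2 ⟨a, ha⟩).2
        · simp only [dif_neg ha]
          intro hmem
          have := Finset.mem_Icc.1 (hF a hmem)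
          have h2 := (Finset.mem_Icc.1 (h.2.2 ⟨a, Finset.mem_compl.2 ha⟩)).1
          omega
      · rw [hTmap]
        ext a
        simp only [Finset.mem_filter, Finset.mem_univ, true_and]
        by_cases ha : a ∈ T
        · simp only [dif_pos ha]
          exact ⟨fun _ => ha, fun _ => (Finset.mem_Icc.1 (g.2.2 ⟨a, ha⟩).1).2⟩
        · simp only [dif_neg ha]
          have := (Finset.mem_Icc.1 (h.2.2 ⟨a, Finset.mem_compl.2 ha⟩)).1
          constructor
          · intro hle; omega
          · intro h'; exact absurd h' ha
    · intro f
      apply Subtype.ext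
      apply Subtype.ext
      funext a
      by_cases ha : a ∈ T
      · simp only [dif_pos ha]
      · simp only [dif_neg ha]
    · rintro ⟨g, h⟩
      apply Prod.ext
      · apply Subtype.ext
        funext a
        simp only [dif_pos a.2]
      · apply Subtype.ext
        funext a
        have ha : ¬ a.1 ∈ T := Finset.mem_compl.1 a.2
        simp only [dif_neg ha]
  -- H count
  have hHcard : ∀ T : Finset α,
      Nat.card {h : {a // a ∈ Tᶜ} → ℕ // Function.Injective h ∧
        ∀ a, h a ∈ Finset.Icc (N+1) k} = (k - N).descFactorial (n - T.card) := by
    intro T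
    have e : {h : {a // a ∈ Tᶜ} → ℕ // Function.Injective h ∧
        ∀ a, h a ∈ Finset.Icc (N+1) k} ≃
        ({a // a ∈ Tᶜ} ↪ {x // x ∈ Finset.Icc (N+1) k}) := by
      refine ⟨fun h => ⟨fun a => ⟨h.1 a, h.2.2 a⟩, ?_⟩, fun e => ⟨fun a => (e a).1, ?_, ?_⟩,
        ?_, ?_⟩
      · intro a b hab
        exact h.2.1 (congrArg Subtype.val hab)
      · intro a b hab
        exact e.injective (Subtype.ext hab)
      · intro a
        exact (e a).2
      · intro h; rfl
      · intro e; rfl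
    rw [Nat.card_congr e, Nat.card_eq_fintype_card, Fintype.card_embedding_eq]
    congr 1
    · simp [Nat.card_Icc]
    · rw [Fintype.card_coe, Finset.card_compl, hn]
  have hcount : Nat.card S = ∑ T : Finset α, A T * (k - N).descFactorial (n - T.card) := by
    rw [← Nat.card_congr (Equiv.sigmaFiberEquiv Tmap)]
    rw [nat_card_sigma']
    apply Finset.sum_congr rfl
    intro T _
    rw [Nat.card_congr (fiberEquiv T), Nat.card_prod, hHcard T, hA]
  -- evaluate the polynomial
  rw [hcount, hp]
  push_cast
  rw [Polynomial.eval_finset_sum]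
  apply Finset.sum_congr rfl
  intro T _
  rw [Polynomial.eval_mul, Polynomial.eval_C]
  congr 1
  rw [hq, Polynomial.eval_prod]
  have : ∀ i ∈ Finset.range (n - T.card),
      (Polynomial.X - Polynomial.C ((N : ℤ) + i)).eval (k : ℤ) = ((k - N : ℕ) : ℤ) - i := by
    intro i _
    simp only [Polynomial.eval_sub, Polynomial.eval_X, Polynomial.eval_C]
    have : ((k - N : ℕ) : ℤ) = (k : ℤ) - N := by exact_mod_cast Int.ofNat_sub hk
    rw [this]; ring
  rw [Finset.prod_congr rfl this, prod_desc]

/-- Each entry of the compactified transfer matrix is a monic integer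
polynomial (for `k ≥ N = |V|`) whose degree is the number of blocks of the layer-2
partition `Q`. -/
theorem transfer_entry_is_polynomial {V : Type*} [Fintype V] [DecidableEq V]
    (G : SimpleGraph V) (P Q : Setoid V)
    (hP : ∀ u v, P.r u v → ¬ G.Adj u v)
    (hQ : ∀ u v, Q.r u v → ¬ G.Adj u v)
    (c₀ : V → ℕ)
    (hc₀range : ∀ v, c₀ v ∈ Finset.Icc 1 (Fintype.card V))
    (hc₀proper : ∀ u v, G.Adj u v → c₀ u ≠ c₀ v)
    (hc₀ker : Setoid.ker c₀ = P) :
    ∃ p : Polynomial ℤ, p.Monic ∧ p.natDegree = Nat.card (Quotient Q) ∧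
      ∀ k : ℕ, Fintype.card V ≤ k →
        p.eval (k : ℤ) =
          (Nat.card {c : V × Fin 2 → ℕ //
            (∀ a, c a ∈ Finset.Icc 1 k) ∧
            (∀ a b, (G.boxProd (pathGraph 2)).Adj a b → c a ≠ c b) ∧
            (∀ v, c (v, 0) = c₀ v) ∧
            Setoid.ker (fun v => c (v, 1)) = Q} : ℤ) := by
  classical
  set N := Fintype.card V with hN
  haveI : Fintype (Quotient Q) := Quotient.fintype Q
  -- forbidden sets
  set F : Quotient Q → Finset ℕ := fun x =>
    (Finset.univ.filter (fun v => (Quotient.mk Q v : Quotient Q) = x)).image c₀ with hF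
  have hFmem : ∀ (x : Quotient Q) (m : ℕ), m ∈ F x ↔ ∃ v, (Quotient.mk Q v : Quotient Q) = x ∧ c₀ v = m := by
    intro x m
    rw [hF]
    simp only [Finset.mem_image, Finset.mem_filter, Finset.mem_univ, true_and]
    try constructor
    all_goals (try (rintro ⟨v, hv, rfl⟩; exact ⟨v, hv, rfl⟩))
  have hFsub : ∀ x, F x ⊆ Finset.Icc 1 N := by
    intro x m hm
    obtain ⟨v, _, rfl⟩ := (hFmem x m).1 hm
    exact hc₀range v
  obtain ⟨p, hpm, hpdeg, hpev⟩ := count_inj_avoid N F hFsub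
  refine ⟨p, hpm, ?_, ?_⟩
  · rw [hpdeg, Nat.card_eq_fintype_card]
  intro k hk
  rw [hpev k hk]
  congr 1
  apply Nat.card_congr
  -- the equivalence between the two sides
  have path01 : (pathGraph 2).Adj 0 1 := by
    rw [pathGraph_adj]; left; rfl
  refine Equiv.symm ⟨?_, ?_, ?_, ?_⟩
  · -- coloring to injective function
    rintro ⟨c, hrange, hproper, hlayer, hker⟩
    have hresp : ∀ u v : V, Q.r u v → c (u, 1) = c (v, 1) := by
      intro u v huv
      rw [← hker] at huv
      exact huv
    refine ⟨Quotient.lift (fun v => c (v, 1)) hresp, ?_, ?_, ?_⟩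
    · intro x y
      induction x using Quotient.inductionOn with | h u =>
      induction y using Quotient.inductionOn with | h v =>
      intro hxy
      have : (Setoid.ker (fun v => c (v, 1))).r u v := hxy
      rw [hker] at this
      exact Quotient.sound this
    · intro x
      induction x using Quotient.inductionOn with | h v =>
      exact hrange (v, 1)
    · intro x
      induction x using Quotient.inductionOn with | h v =>
      intro hmem
      obtain ⟨u, hu, hcu⟩ := (hFmem _ _).1 hmem
      have huv : Q.r u v := Quotient.exact hu
      have h1 : c (u, 1) = c (v, 1) := hresp u v huv
      have h2 : Quotient.lift (fun v => c (v, 1)) hresp (Quotient.mk Q v) = c (v, 1) := rfl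
      rw [h2] at hcu
      have hadj : (G.boxProd (pathGraph 2)).Adj (u, 0) (u, 1) :=
        boxProd_adj.2 (Or.inr ⟨path01, rfl⟩)
      exact hproper _ _ hadj (by rw [hlayer u, hcu, h1])
  · -- injective function to coloring
    rintro ⟨f, hinj, hrange, havoid⟩
    refine ⟨fun a => if a.2 = 0 then c₀ a.1 else f (Quotient.mk Q a.1), ?_, ?_, ?_, ?_⟩
    · intro a
      show (if a.2 = 0 then c₀ a.1 else f (Quotient.mk Q a.1)) ∈ Finset.Icc 1 k
      by_cases h : a.2 = 0
      · rw [if_pos h]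
        have := Finset.mem_Icc.1 (hc₀range a.1)
        exact Finset.mem_Icc.2 ⟨this.1, le_trans this.2 hk⟩
      · rw [if_neg h]
        exact hrange _
    · rintro ⟨u, i⟩ ⟨v, j⟩ hadj
      show (if i = 0 then c₀ u else f (Quotient.mk Q u)) ≠
        (if j = 0 then c₀ v else f (Quotient.mk Q v))
      rcases boxProd_adj.1 hadj with ⟨hGuv, hij⟩ | ⟨hpij, huv⟩
      · simp only at hGuv hij
        subst hij
        by_cases h : i = 0
        · simp only [if_pos h]
          exact hc₀proper u v hGuv
        · simp only [if_neg h]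
          intro hfe
          have := Quotient.exact (hinj hfe)
          exact hQ u v this hGuv
      · simp only at hpij huv
        subst huv
        have hij : i ≠ j := (pathGraph 2).ne_of_adj hpij
        have hv : ¬ f (Quotient.mk Q u) = c₀ u := by
          intro h
          exact havoid (Quotient.mk Q u) ((hFmem _ _).2 ⟨u, rfl, h.symm⟩)
        by_cases h : i = 0
        · have hj : ¬ j = 0 := by rw [h] at hij; exact fun hj0 => hij hj0.symm
          simp only [if_pos h, if_neg hj]
          exact fun h' => hv h'.symm
        · have hj : j = 0 := by omega
          simp only [if_neg h, if_pos hj]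
          exact hv
    · intro v
      show (if (0 : Fin 2) = 0 then c₀ v else f (Quotient.mk Q v)) = c₀ v
      rw [if_pos rfl]
    · apply Setoid.ext
      intro u v
      have h1 : (1 : Fin 2) ≠ 0 := by decide
      show (if (1 : Fin 2) = 0 then c₀ u else f (Quotient.mk Q u)) =
        (if (1 : Fin 2) = 0 then c₀ v else f (Quotient.mk Q v)) ↔ Q.r u v
      simp only [if_neg h1]
      constructor
      · intro h
        exact Quotient.exact (hinj h)
      · intro h
        exact congrArg f (Quotient.sound h)
  · -- left inverse
    rintro ⟨c, hrange, hproper, hlayer, hker⟩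
    apply Subtype.ext
    funext a
    obtain ⟨v, i⟩ := a
    by_cases h : i = 0
    · subst h
      exact (hlayer v).symm
    · have h' : i.val ≠ 0 := fun hv => h (Fin.ext hv)
      have hi : i = 1 := Fin.ext (by have := i.2; omega)
      subst hi
      rfl
  · -- right inverse
    rintro ⟨f, hinj, hrange, havoid⟩
    apply Subtype.ext
    funext x
    induction x using Quotient.inductionOn with | h v =>
    rfl
end

section
/- Let G be a finite simple graph on vertex set V, let k ≥ |V|, let I be the set of all partitions of V into independent sets of G, and for each P ∈ I fix a proper k-coloring c_P of G with kernel partition P. Define L ∈ ℕ^{I×I} by L(P,Q) = number of proper k-colorings of G □ P₂ whose layer-1 coloring equals c_P and whose layer-2 kernel partition equals Q. Then for every integer n ≥ 1, the total number of proper k-colorings of G □ P_{n+1} equals Σ_{P∈I} w_P · Σ_{Q∈I} (Lⁿ)(P,Q), where w_P is the number of proper k-colorings of G with kernel partition P. -/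
open SimpleGraph

/-- The set of partitions (as setoids) of the vertex set of `G` all of whose blocks
are independent sets of `G`. -/
def IndepPartition {V : Type*} (G : SimpleGraph V) : Type _ :=
  {s : Setoid V // ∀ u v, s.r u v → ¬ G.Adj u v}

instance {V : Type*} [Finite V] (G : SimpleGraph V) : Finite (IndepPartition G) := by
  have : Finite (Setoid V) :=
    Finite.of_injective (fun s : Setoid V => s.r)
      (fun a b h => Setoid.ext fun x y => by rw [show a.r = b.r from h])
  exact Subtype.finite

noncomputable instance {V : Type*} [Finite V] (G : SimpleGraph V) :
    Fintype (IndepPartition G) := Fintype.ofFinite _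

noncomputable instance {V : Type*} (G : SimpleGraph V) :
    DecidableEq (IndepPartition G) := Classical.decEq _

private lemma natCard_sigma {ι : Type*} [Fintype ι] (f : ι → Type*) [∀ i, Finite (f i)] :
    Nat.card (Σ i, f i) = ∑ i, Nat.card (f i) := by
  letI : ∀ i, Fintype (f i) := fun i => Fintype.ofFinite _
  simp [Nat.card_eq_fintype_card, Fintype.card_sigma]

private lemma card_fiber_sum {β ι : Type*} [Finite β] [Fintype ι] [DecidableEq ι] (g : β → ι) :
    Nat.card β = ∑ i, Nat.card {x : β // g x = i} := by
  rw [Nat.card_congr (Equiv.sigmaFiberEquiv g).symm, natCard_sigma]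

private lemma ker_comp_perm {α : Type*} {k : ℕ} (σ : Equiv.Perm (Fin k)) (f : α → Fin k) :
    Setoid.ker (fun v => σ (f v)) = Setoid.ker f :=
  Setoid.ext fun x y => by
    constructor
    · intro h; exact σ.injective (Setoid.ker_def.mp h)
    · intro h; exact Setoid.ker_def.mpr (congrArg σ (Setoid.ker_def.mp h))

private lemma exists_perm_of_ker_eq {α : Type*} {k : ℕ} (c₁ c₂ : α → Fin k)
    (h : Setoid.ker c₁ = Setoid.ker c₂) :
    ∃ σ : Equiv.Perm (Fin k), ∀ v, σ (c₁ v) = c₂ v := by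
  classical
  have key : ∀ x y, c₁ x = c₁ y ↔ c₂ x = c₂ y := by
    intro x y
    constructor
    · intro hx
      have : Setoid.ker c₂ x y := h ▸ Setoid.ker_def.mpr hx
      exact Setoid.ker_def.mp this
    · intro hx
      have : Setoid.ker c₁ x y := h ▸ Setoid.ker_def.mpr hx
      exact Setoid.ker_def.mp this
  let F : {x // x ∈ Set.range c₁} → {x // x ∈ Set.range c₂} :=
    fun x => ⟨c₂ x.2.choose, ⟨x.2.choose, rfl⟩⟩
  have hbij : Function.Bijective F := by
    constructor
    · rintro ⟨x, hx⟩ ⟨y, hy⟩ hxy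
      have h1 : c₂ hx.choose = c₂ hy.choose := Subtype.ext_iff.mp hxy
      have h2 : c₁ hx.choose = c₁ hy.choose := (key _ _).mpr h1
      have h3 : c₁ hx.choose = x := hx.choose_spec
      have h4 : c₁ hy.choose = y := hy.choose_spec
      exact Subtype.ext (show x = y by rw [← h3, ← h4]; exact h2)
    · rintro ⟨y, v, rfl⟩
      refine ⟨⟨c₁ v, ⟨v, rfl⟩⟩, ?_⟩
      apply Subtype.ext
      show c₂ (⟨c₁ v, ⟨v, rfl⟩⟩ : {x // x ∈ Set.range c₁}).2.choose = c₂ v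
      exact (key _ _).mp (⟨c₁ v, ⟨v, rfl⟩⟩ : {x // x ∈ Set.range c₁}).2.choose_spec
  refine ⟨(Equiv.ofBijective F hbij).extendSubtype, fun v => ?_⟩
  rw [Equiv.extendSubtype_apply_of_mem _ (c₁ v) ⟨v, rfl⟩]
  show c₂ (⟨c₁ v, ⟨v, rfl⟩⟩ : {x // x ∈ Set.range c₁}).2.choose = c₂ v
  exact (key _ _).mp (⟨c₁ v, ⟨v, rfl⟩⟩ : {x // x ∈ Set.range c₁}).2.choose_spec

private lemma ext_card_eq {V : Type*} (G : SimpleGraph V) {k : ℕ} {c₁ c₂ : V → Fin k}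
    (h : Setoid.ker c₁ = Setoid.ker c₂) (s : Setoid V) :
    Nat.card {d : V → Fin k //
        (∀ u v, G.Adj u v → d u ≠ d v) ∧ (∀ v, d v ≠ c₁ v) ∧ Setoid.ker d = s} =
      Nat.card {d : V → Fin k //
        (∀ u v, G.Adj u v → d u ≠ d v) ∧ (∀ v, d v ≠ c₂ v) ∧ Setoid.ker d = s} := by
  obtain ⟨σ, hσ⟩ := exists_perm_of_ker_eq c₁ c₂ h
  refine Nat.card_congr ⟨fun d => ⟨fun v => σ (d.1 v), ?_, ?_, ?_⟩,
    fun d => ⟨fun v => σ.symm (d.1 v), ?_, ?_, ?_⟩, ?_, ?_⟩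
  · intro u v huv hne
    exact d.2.1 u v huv (σ.injective hne)
  · intro v hne
    exact d.2.2.1 v (σ.injective (hne.trans (hσ v).symm))
  · rw [ker_comp_perm]; exact d.2.2.2
  · intro u v huv hne
    exact d.2.1 u v huv (σ.symm.injective hne)
  · intro v hne
    apply d.2.2.1 v
    rw [← hσ v, ← hne]
    simp
  · rw [ker_comp_perm σ.symm]; exact d.2.2.2
  · intro d
    apply Subtype.ext
    funext v
    simp
  · intro d
    apply Subtype.ext
    funext v
    simp

private lemma layer_proper {V : Type*} {G : SimpleGraph V} {k m : ℕ} {c : V × Fin m → Fin k}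
    (h : ∀ a b, (G.boxProd (pathGraph m)).Adj a b → c a ≠ c b) (i : Fin m) :
    ∀ u v, G.Adj u v → c (u, i) ≠ c (v, i) :=
  fun u v huv => h (u, i) (v, i) (boxProd_adj.mpr (Or.inl ⟨huv, rfl⟩))

private def splitEquiv (V : Type*) (k n : ℕ) :
    (V × Fin (n + 1 + 1) → Fin k) ≃ (V × Fin (n + 1) → Fin k) × (V → Fin k) where
  toFun c := (fun p => c (p.1, p.2.castSucc), fun v => c (v, Fin.last (n + 1)))
  invFun cd := fun p => Fin.lastCases (cd.2 p.1) (fun j => cd.1 (p.1, j)) p.2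
  left_inv c := by
    funext p
    obtain ⟨v, i⟩ := p
    induction i using Fin.lastCases with
    | last => simp
    | cast j => simp
  right_inv cd := by
    obtain ⟨c', d⟩ := cd
    refine Prod.ext ?_ ?_ <;> funext p <;> simp

private lemma prB_split {V : Type*} (G : SimpleGraph V) {k n : ℕ} (c : V × Fin (n + 1 + 1) → Fin k) :
    (∀ a b, (G.boxProd (pathGraph (n + 1 + 1))).Adj a b → c a ≠ c b) ↔
      ((∀ a b, (G.boxProd (pathGraph (n + 1))).Adj a b →
          c (a.1, a.2.castSucc) ≠ c (b.1, b.2.castSucc)) ∧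
        (∀ u v, G.Adj u v → c (u, Fin.last (n + 1)) ≠ c (v, Fin.last (n + 1))) ∧
        (∀ v, c (v, Fin.last (n + 1)) ≠ c (v, (Fin.last n).castSucc))) := by
  constructor
  · intro h
    refine ⟨fun a b hab => ?_, layer_proper h _, fun v => ?_⟩
    · apply h
      rw [boxProd_adj] at hab ⊢
      rcases hab with ⟨h1, h2⟩ | ⟨h1, h2⟩
      · exact Or.inl ⟨h1, by simp [h2]⟩
      · refine Or.inr ⟨?_, h2⟩
        rw [pathGraph_adj] at h1 ⊢
        simpa using h1
    · apply h
      rw [boxProd_adj]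
      refine Or.inr ⟨?_, rfl⟩
      rw [pathGraph_adj]
      right; simp
  · rintro ⟨h1, h2, h3⟩ ⟨u, i⟩ ⟨v, j⟩ hab
    rw [boxProd_adj] at hab
    dsimp only at hab
    induction i using Fin.lastCases with
    | last =>
      induction j using Fin.lastCases with
      | last =>
        rcases hab with ⟨ha, _⟩ | ⟨ha, _⟩
        · exact h2 u v ha
        · rw [pathGraph_adj] at ha; omega
      | cast j =>
        rcases hab with ⟨ha, hb⟩ | ⟨ha, hb⟩
        · exfalso
          have : (Fin.last (n + 1)).val = (j.castSucc).val := congrArg Fin.val hb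
          simp at this
          omega
        · rw [pathGraph_adj] at ha
          have hj : j = Fin.last n := by
            apply Fin.ext
            simp at ha ⊢
            omega
          have hb' : u = v := hb
          subst hb'; subst hj
          exact h3 u
    | cast i =>
      induction j using Fin.lastCases with
      | last =>
        rcases hab with ⟨ha, hb⟩ | ⟨ha, hb⟩
        · exfalso
          have : (i.castSucc).val = (Fin.last (n + 1)).val := congrArg Fin.val hb
          simp at this
          omega
        · rw [pathGraph_adj] at ha
          have hi : i = Fin.last n := by
            apply Fin.ext
            simp at ha ⊢
            omega
          have hb' : u = v := hb
          subst hb'; subst hi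
          exact (h3 u).symm
      | cast j =>
        rcases hab with ⟨ha, hb⟩ | ⟨ha, hb⟩
        · have hb' : i = j := Fin.castSucc_injective _ hb
          subst hb'
          exact h1 (u, i) (v, i) (boxProd_adj.mpr (Or.inl ⟨ha, rfl⟩))
        · have hb' : u = v := hb
          subst hb'
          refine h1 (u, i) (u, j) (boxProd_adj.mpr (Or.inr ⟨?_, rfl⟩))
          rw [pathGraph_adj] at ha ⊢
          simp at ha ⊢
          omega

private lemma L_eq' {V : Type*} [Fintype V] [DecidableEq V] {G : SimpleGraph V} {k : ℕ}
    (cP : IndepPartition G → V → Fin k)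
    (hcPproper : ∀ P : IndepPartition G, ∀ u v, G.Adj u v → cP P u ≠ cP P v)
    (P Q : IndepPartition G) :
    Nat.card {c : V × Fin 2 → Fin k //
        (∀ a b, (G.boxProd (pathGraph 2)).Adj a b → c a ≠ c b) ∧
        (∀ v, c (v, 0) = cP P v) ∧
        Setoid.ker (fun v => c (v, 1)) = Q.1} =
      Nat.card {d : V → Fin k //
        (∀ u v, G.Adj u v → d u ≠ d v) ∧ (∀ v, d v ≠ cP P v) ∧ Setoid.ker d = Q.1} := by
  classical
  have adj01 : (pathGraph 2).Adj 0 1 := by rw [pathGraph_adj]; left; rfl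
  refine Nat.card_congr ⟨fun c => ⟨fun v => c.1 (v, 1), ?_, ?_, c.2.2.2⟩,
    fun d => ⟨fun p => if p.2 = 0 then cP P p.1 else d.1 p.1, ?_, ?_, ?_⟩, ?_, ?_⟩
  · exact layer_proper c.2.1 1
  · intro v hne
    have hadj : (G.boxProd (pathGraph 2)).Adj (v, 1) (v, 0) :=
      boxProd_adj.mpr (Or.inr ⟨adj01.symm, rfl⟩)
    exact c.2.1 _ _ hadj (hne.trans (c.2.2.1 v).symm)
  · rintro ⟨a, i⟩ ⟨b, j⟩ hab
    rw [boxProd_adj] at hab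
    dsimp only at hab ⊢
    rcases hab with ⟨hG, (he : i = j)⟩ | ⟨hp, (he : a = b)⟩
    · subst he
      by_cases hi : i = 0
      · simpa [hi] using hcPproper P a b hG
      · simpa [hi] using d.2.1 a b hG
    · subst he
      rw [pathGraph_adj] at hp
      fin_cases i <;> fin_cases j <;> simp_all
      · exact fun h => d.2.2.1 a h.symm
      · exact d.2.2.1 a
  · intro v; simp
  · have : (fun v : V => if (1 : Fin 2) = 0 then cP P v else d.1 v) = d.1 := by
      funext v; simp
    rw [this]
    exact d.2.2.2
  · intro c
    apply Subtype.ext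
    funext ⟨v, i⟩
    dsimp only
    fin_cases i
    · simpa using (c.2.2.1 v).symm
    · simp
  · intro d
    apply Subtype.ext
    funext v
    simp

/-- The total number of proper `k`-colorings of `G □ P_{n+1}` is the
weighted sum `Σ_P w_P Σ_Q (Lⁿ)(P,Q)`, where `w_P` is the number of proper
`k`-colorings of `G` with kernel partition `P`. -/
theorem chromatic_from_transfer_matrix {V : Type*} [Fintype V] [DecidableEq V]
    (G : SimpleGraph V) (k : ℕ) (hk : Fintype.card V ≤ k)
    (cP : IndepPartition G → V → Fin k)
    (hcPproper : ∀ P : IndepPartition G, ∀ u v, G.Adj u v → cP P u ≠ cP P v)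
    (hcPker : ∀ P : IndepPartition G, Setoid.ker (cP P) = P.1)
    (L : Matrix (IndepPartition G) (IndepPartition G) ℕ)
    (hL : ∀ P Q : IndepPartition G,
      L P Q = Nat.card {c : V × Fin 2 → Fin k //
        (∀ a b, (G.boxProd (pathGraph 2)).Adj a b → c a ≠ c b) ∧
        (∀ v, c (v, 0) = cP P v) ∧
        Setoid.ker (fun v => c (v, 1)) = Q.1}) :
    ∀ n : ℕ, 1 ≤ n →
      Nat.card {c : V × Fin (n + 1) → Fin k //
          ∀ a b, (G.boxProd (pathGraph (n + 1))).Adj a b → c a ≠ c b} =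
        ∑ P : IndepPartition G,
          (Nat.card {c : V → Fin k //
            (∀ u v, G.Adj u v → c u ≠ c v) ∧ Setoid.ker c = P.1}) *
          ∑ Q : IndepPartition G, (L ^ n) P Q := by
  classical
  intro n _hn
  have key : ∀ m : ℕ, ∀ Q : IndepPartition G,
      Nat.card {c : V × Fin (m + 1) → Fin k //
        (∀ a b, (G.boxProd (pathGraph (m + 1))).Adj a b → c a ≠ c b) ∧
        Setoid.ker (fun v => c (v, Fin.last m)) = Q.1} =
      ∑ P : IndepPartition G,
        (Nat.card {c : V → Fin k //
          (∀ u v, G.Adj u v → c u ≠ c v) ∧ Setoid.ker c = P.1}) * (L ^ m) P Q := by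
    intro m
    induction m with
    | zero =>
      intro Q
      have hL0 : ∀ P : IndepPartition G, (L ^ 0) P Q = if P = Q then 1 else 0 := by
        intro P; rw [pow_zero, Matrix.one_apply]
      rw [Finset.sum_congr rfl (fun P _ => by rw [hL0])]
      rw [show ∑ P : IndepPartition G,
          (Nat.card {c : V → Fin k //
            (∀ u v, G.Adj u v → c u ≠ c v) ∧ Setoid.ker c = P.1}) * (if P = Q then 1 else 0)
          = Nat.card {c : V → Fin k //
            (∀ u v, G.Adj u v → c u ≠ c v) ∧ Setoid.ker c = Q.1} by
        simp [mul_ite, Finset.sum_ite_eq']]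
      apply Nat.card_congr
      refine ⟨fun c => ⟨fun v => c.1 (v, Fin.last 0), layer_proper c.2.1 _, c.2.2⟩,
        fun d => ⟨fun p => d.1 p.1, ?_, ?_⟩, ?_, ?_⟩
      · rintro ⟨a, i⟩ ⟨b, j⟩ hab
        rw [boxProd_adj] at hab
        dsimp only at hab
        rcases hab with ⟨hG, _⟩ | ⟨hp, _⟩
        · exact d.2.1 a b hG
        · rw [pathGraph_adj] at hp
          exfalso
          have h1 := i.isLt
          have h2 := j.isLt
          omega
      · exact d.2.2
      · intro c
        apply Subtype.ext
        funext p
        exact congrArg (fun t => c.1 (p.1, t)) (Fin.ext (by omega))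
      · intro d
        rfl
    | succ m ih =>
      intro Q
      have e1 : {c : V × Fin (m + 1 + 1) → Fin k //
          (∀ a b, (G.boxProd (pathGraph (m + 1 + 1))).Adj a b → c a ≠ c b) ∧
          Setoid.ker (fun v => c (v, Fin.last (m + 1))) = Q.1} ≃
          {x : (V × Fin (m + 1) → Fin k) × (V → Fin k) //
            (∀ a b, (G.boxProd (pathGraph (m + 1))).Adj a b → x.1 a ≠ x.1 b) ∧
            (∀ u v, G.Adj u v → x.2 u ≠ x.2 v) ∧
            (∀ v, x.2 v ≠ x.1 (v, Fin.last m)) ∧ Setoid.ker x.2 = Q.1} :=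
        Equiv.subtypeEquiv (splitEquiv V k m) (fun c => by
          rw [prB_split G c, and_assoc, and_assoc]
          exact Iff.rfl)
      rw [Nat.card_congr e1]
      rw [card_fiber_sum (ι := IndepPartition G) (fun x : {x : (V × Fin (m + 1) → Fin k) × (V → Fin k) //
            (∀ a b, (G.boxProd (pathGraph (m + 1))).Adj a b → x.1 a ≠ x.1 b) ∧
            (∀ u v, G.Adj u v → x.2 u ≠ x.2 v) ∧
            (∀ v, x.2 v ≠ x.1 (v, Fin.last m)) ∧ Setoid.ker x.2 = Q.1} =>
        (⟨Setoid.ker (fun v => x.1.1 (v, Fin.last m)),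
          fun u v hr hadj => layer_proper x.2.1 (Fin.last m) u v hadj hr⟩ : IndepPartition G))]
      have c3 : ∀ R : IndepPartition G,
          Nat.card {x : {x : (V × Fin (m + 1) → Fin k) × (V → Fin k) //
            (∀ a b, (G.boxProd (pathGraph (m + 1))).Adj a b → x.1 a ≠ x.1 b) ∧
            (∀ u v, G.Adj u v → x.2 u ≠ x.2 v) ∧
            (∀ v, x.2 v ≠ x.1 (v, Fin.last m)) ∧ Setoid.ker x.2 = Q.1} //
            (⟨Setoid.ker (fun v => x.1.1 (v, Fin.last m)),
              fun u v hr hadj => layer_proper x.2.1 (Fin.last m) u v hadj hr⟩ : IndepPartition G) = R} =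
          (Nat.card {c : V × Fin (m + 1) → Fin k //
            (∀ a b, (G.boxProd (pathGraph (m + 1))).Adj a b → c a ≠ c b) ∧
            Setoid.ker (fun v => c (v, Fin.last m)) = R.1}) * L R Q := by
        intro R
        letI : Fintype {c : V × Fin (m + 1) → Fin k //
            (∀ a b, (G.boxProd (pathGraph (m + 1))).Adj a b → c a ≠ c b) ∧
            Setoid.ker (fun v => c (v, Fin.last m)) = R.1} := Fintype.ofFinite _
        have e2 : {x : {x : (V × Fin (m + 1) → Fin k) × (V → Fin k) //
            (∀ a b, (G.boxProd (pathGraph (m + 1))).Adj a b → x.1 a ≠ x.1 b) ∧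
            (∀ u v, G.Adj u v → x.2 u ≠ x.2 v) ∧
            (∀ v, x.2 v ≠ x.1 (v, Fin.last m)) ∧ Setoid.ker x.2 = Q.1} //
            (⟨Setoid.ker (fun v => x.1.1 (v, Fin.last m)),
              fun u v hr hadj => layer_proper x.2.1 (Fin.last m) u v hadj hr⟩ : IndepPartition G) = R} ≃
            Σ c' : {c : V × Fin (m + 1) → Fin k //
              (∀ a b, (G.boxProd (pathGraph (m + 1))).Adj a b → c a ≠ c b) ∧
              Setoid.ker (fun v => c (v, Fin.last m)) = R.1},
              {d : V → Fin k // (∀ u v, G.Adj u v → d u ≠ d v) ∧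
                (∀ v, d v ≠ c'.1 (v, Fin.last m)) ∧ Setoid.ker d = Q.1} :=
          ⟨fun x => ⟨⟨x.1.1.1, x.1.2.1, congrArg Subtype.val x.2⟩,
              ⟨x.1.1.2, x.1.2.2.1, x.1.2.2.2.1, x.1.2.2.2.2⟩⟩,
           fun y => ⟨⟨⟨y.1.1, y.2.1⟩, y.1.2.1, y.2.2.1, y.2.2.2.1, y.2.2.2.2⟩,
              Subtype.ext y.1.2.2⟩,
           fun x => rfl, fun y => rfl⟩
        rw [Nat.card_congr e2, natCard_sigma]
        have hD : ∀ c' : {c : V × Fin (m + 1) → Fin k //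
              (∀ a b, (G.boxProd (pathGraph (m + 1))).Adj a b → c a ≠ c b) ∧
              Setoid.ker (fun v => c (v, Fin.last m)) = R.1},
            Nat.card {d : V → Fin k // (∀ u v, G.Adj u v → d u ≠ d v) ∧
              (∀ v, d v ≠ c'.1 (v, Fin.last m)) ∧ Setoid.ker d = Q.1} = L R Q := by
          intro c'
          have hker : Setoid.ker (fun v => c'.1 (v, Fin.last m)) = Setoid.ker (cP R) := by
            rw [c'.2.2, hcPker]
          have h1 := ext_card_eq G hker Q.1
          rw [h1, hL R Q, L_eq' cP hcPproper R Q]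
        simp only [hD, Finset.sum_const, Finset.card_univ, smul_eq_mul]
        congr 1
        exact Nat.card_eq_fintype_card.symm
      refine (Finset.sum_congr rfl (fun R _ => c3 R)).trans ?_
      rw [Finset.sum_congr rfl (fun R _ => by rw [ih R])]
      have hpow : ∀ P, (L ^ (m + 1)) P Q = ∑ R, (L ^ m) P R * L R Q := by
        intro P; rw [pow_succ, Matrix.mul_apply]
      simp only [hpow, Finset.sum_mul, Finset.mul_sum, mul_assoc]
      rw [Finset.sum_comm]
  rw [card_fiber_sum (ι := IndepPartition G) (fun c : {c : V × Fin (n + 1) → Fin k //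
        ∀ a b, (G.boxProd (pathGraph (n + 1))).Adj a b → c a ≠ c b} =>
    (⟨Setoid.ker (fun v => c.1 (v, Fin.last n)),
      fun u v hr hadj => layer_proper c.2 (Fin.last n) u v hadj hr⟩ : IndepPartition G))]
  have hQ : ∀ Q : IndepPartition G,
      Nat.card {x : {c : V × Fin (n + 1) → Fin k //
          ∀ a b, (G.boxProd (pathGraph (n + 1))).Adj a b → c a ≠ c b} //
        (⟨Setoid.ker (fun v => x.1 (v, Fin.last n)),
          fun u v hr hadj => layer_proper x.2 (Fin.last n) u v hadj hr⟩ : IndepPartition G) = Q} =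
      Nat.card {c : V × Fin (n + 1) → Fin k //
        (∀ a b, (G.boxProd (pathGraph (n + 1))).Adj a b → c a ≠ c b) ∧
        Setoid.ker (fun v => c (v, Fin.last n)) = Q.1} := by
    intro Q
    exact Nat.card_congr
      ⟨fun x => ⟨x.1.1, x.1.2, congrArg Subtype.val x.2⟩,
       fun c => ⟨⟨c.1, c.2.1⟩, Subtype.ext c.2.2⟩,
       fun x => rfl, fun c => rfl⟩
  refine (Finset.sum_congr rfl (fun Q _ => (hQ Q).trans (key n Q))).trans ?_
  rw [Finset.sum_comm]
  simp [Finset.mul_sum]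
end

section
/- For every integer n ≥ 1, the number of partitions of {1,…,n} into blocks none of which contains two consecutive integers i and i+1 (equivalently, all of whose blocks are independent sets of the path graph P_n) equals B_{n−1}, the number of partitions of a set with n−1 elements. -/
open Function Finset


section Arc

variable {m : ℕ}

/-- Arc functions: `f i` is the immediate predecessor of `i` in its block. -/
def ArcOK (m : ℕ) (f : Fin m → Fin m) : Prop :=
  (∀ i, f i ≤ i) ∧ ∀ i j, f i < i → f j < j → f i = f j → i = j

open scoped Classical in
noncomputable def toArc (m : ℕ) (st : Setoid (Fin m)) (i : Fin m) : Fin m :=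
  if h : (Finset.univ.filter fun j => j < i ∧ st.r j i).Nonempty
  then (Finset.univ.filter fun j => j < i ∧ st.r j i).max' h else i

lemma toArc_le (st : Setoid (Fin m)) (i : Fin m) : toArc m st i ≤ i := by
  classical
  unfold toArc
  split_ifs with h
  · have := (Finset.max'_mem _ h)
    simp only [Finset.mem_filter] at this
    exact le_of_lt this.2.1
  · exact le_refl _

lemma toArc_rel (st : Setoid (Fin m)) (i : Fin m) : st.r (toArc m st i) i := by
  classical
  unfold toArc
  split_ifs with h
  · have := (Finset.max'_mem _ h)
    simp only [Finset.mem_filter] at this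
    exact this.2.2
  · exact st.refl i

lemma toArc_max (st : Setoid (Fin m)) {i j : Fin m} (hj : j < i) (hr : st.r j i) :
    j ≤ toArc m st i := by
  classical
  have hmem : j ∈ Finset.univ.filter fun j => j < i ∧ st.r j i := by
    simp [hj, hr]
  unfold toArc
  rw [dif_pos ⟨j, hmem⟩]
  exact Finset.le_max' _ _ hmem

lemma toArc_lt (st : Setoid (Fin m)) {i j : Fin m} (hj : j < i) (hr : st.r j i) :
    toArc m st i < i := by
  classical
  have hmem : j ∈ Finset.univ.filter fun j => j < i ∧ st.r j i := by
    simp [hj, hr]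
  unfold toArc
  rw [dif_pos ⟨j, hmem⟩]
  have := Finset.max'_mem (Finset.univ.filter fun j => j < i ∧ st.r j i) ⟨j, hmem⟩
  simp only [Finset.mem_filter] at this
  exact this.2.1

lemma toArc_fixed (st : Setoid (Fin m)) {i : Fin m} (h : toArc m st i = i)
    {j : Fin m} (hj : j < i) : ¬ st.r j i := fun hr =>
  absurd h (ne_of_lt (toArc_lt st hj hr))

end Arc

section Iter
variable {m : ℕ} {f : Fin m → Fin m}

lemma iter_le (hf : ∀ i, f i ≤ i) (k : ℕ) (i : Fin m) : f^[k] i ≤ i := by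
  induction k generalizing i with
  | zero => exact le_refl _
  | succ k ih =>
    rw [Function.iterate_succ_apply]
    exact le_trans (ih (f i)) (hf i)

lemma iter_fixed {x : Fin m} (hx : f x = x) (k : ℕ) : f^[k] x = x := by
  induction k with
  | zero => rfl
  | succ k ih => rw [Function.iterate_succ_apply', ih, hx]

lemma exists_fixed (hf : ∀ i, f i ≤ i) (x : Fin m) :
    ∃ k ≤ (x : ℕ), f (f^[k] x) = f^[k] x := by
  suffices h : ∀ v : ℕ, ∀ x : Fin m, (x : ℕ) ≤ v → ∃ k ≤ (x : ℕ), f (f^[k] x) = f^[k] x from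
    h (x : ℕ) x le_rfl
  intro v
  induction v with
  | zero =>
    intro x hx
    refine ⟨0, Nat.zero_le _, ?_⟩
    have h1 : (f x : ℕ) ≤ (x : ℕ) := hf x
    simp only [Function.iterate_zero_apply]
    exact Fin.ext (by omega)
  | succ v ih =>
    intro x hx
    by_cases hfx : f x = x
    · exact ⟨0, Nat.zero_le _, hfx⟩
    · have hlt : f x < x := lt_of_le_of_ne (hf x) hfx
      have hlt' : (f x : ℕ) < (x : ℕ) := hlt
      obtain ⟨k, hk, hfix⟩ := ih (f x) (by omega)
      refine ⟨k + 1, by omega, ?_⟩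
      rw [Function.iterate_succ_apply]
      exact hfix

lemma stabilize (hf : ∀ i, f i ≤ i) (x : Fin m) : f (f^[m] x) = f^[m] x := by
  obtain ⟨k, hk, hfix⟩ := exists_fixed hf x
  have hkm : k ≤ m := le_trans hk (le_of_lt x.isLt)
  have h2 : f^[(m-k)+k] x = f^[k] x := by
    rw [Function.iterate_add_apply]
    exact iter_fixed hfix _
  rw [Nat.sub_add_cancel hkm] at h2
  rw [h2]; exact hfix

lemma chain_le (hf : ∀ i, f i ≤ i)
    (hinj : ∀ i j, f i < i → f j < j → f i = f j → i = j) :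
    ∀ N a b, a + b ≤ N → ∀ i j : Fin m, j < i → f^[a] j = f^[b] i → j ≤ f i := by
  intro N
  induction N with
  | zero =>
    intro a b hab i j hji heq
    have ha : a = 0 := by omega
    have hb : b = 0 := by omega
    subst ha; subst hb
    simp only [Function.iterate_zero_apply] at heq
    exact absurd heq (ne_of_lt hji)
  | succ N ihN =>
    intro a b hab i j hji heq
    match b, a with
    | 0, 0 =>
      simp only [Function.iterate_zero_apply] at heq
      exact absurd heq (ne_of_lt hji)
    | 0, a + 1 =>
      simp only [Function.iterate_zero_apply] at heq
      have : f^[a+1] j ≤ j := iter_le hf _ _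
      rw [heq] at this
      exact absurd hji (not_lt_of_ge this)
    | b + 1, 0 =>
      simp only [Function.iterate_zero_apply] at heq
      rw [heq, Function.iterate_succ_apply]
      exact iter_le hf _ _
    | b + 1, a + 1 =>
      rw [Function.iterate_succ_apply', Function.iterate_succ_apply'] at heq
      set x := f^[a] j with hx
      set y := f^[b] i with hy
      by_cases hxy : x = y
      · exact ihN a b (by omega) i j hji hxy
      · -- one of x, y is fixed
        rcases lt_or_eq_of_le (hf x) with hxl | hxf
        · rcases lt_or_eq_of_le (hf y) with hyl | hyf
          · exact absurd (hinj x y hxl hyl heq) hxy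
          · -- f y = y
            have h3 : f^[a+1] j = f^[b] i := by
              rw [Function.iterate_succ_apply', ← hx, heq, hyf]
            exact ihN (a+1) b (by omega) i j hji h3
        · -- f x = x
          have h3 : f^[a] j = f^[b+1] i := by
            rw [Function.iterate_succ_apply', ← hy, ← heq, hxf]
          exact ihN a (b+1) (by omega) i j hji h3
end Iter

section EquivPart
variable {m : ℕ}

lemma toArc_arcOK (st : Setoid (Fin m)) : ArcOK m (toArc m st) := by
  refine ⟨toArc_le st, fun i j hi hj heq => ?_⟩
  -- f i = f j, both strict; wlog i < j
  rcases lt_trichotomy i j with h | h | h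
  · -- i < j, st.r i j via common rel
    have hri : st.r (toArc m st i) i := toArc_rel st i
    have hrj : st.r (toArc m st j) j := toArc_rel st j
    have hrij : st.r i j := st.trans (st.symm (heq ▸ hri)) hrj
    have h2 : (i : ℕ) ≤ toArc m st j := toArc_max st h hrij
    have h1 : (toArc m st i : ℕ) < i := hi
    have h3 : (toArc m st i : ℕ) = toArc m st j := congrArg Fin.val heq
    exact ((lt_irrefl _ (by omega : (i : ℕ) < i))).elim
  · exact h
  · have hri : st.r (toArc m st i) i := toArc_rel st i
    have hrj : st.r (toArc m st j) j := toArc_rel st j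
    have hrji : st.r j i := st.trans (st.symm (heq ▸ hrj)) hri
    have h2 : (j : ℕ) ≤ toArc m st i := toArc_max st h hrji
    have h1 : (toArc m st j : ℕ) < j := hj
    have h3 : (toArc m st i : ℕ) = toArc m st j := congrArg Fin.val heq
    exact ((lt_irrefl _ (by omega : (j : ℕ) < j))).elim

lemma iter_rel (st : Setoid (Fin m)) (k : ℕ) (i : Fin m) :
    st.r ((toArc m st)^[k] i) i := by
  induction k with
  | zero => exact st.refl i
  | succ k ih =>
    rw [Function.iterate_succ_apply']
    exact st.trans (toArc_rel st _) ih

lemma iter_min (st : Setoid (Fin m)) (i : Fin m) {j : Fin m}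
    (hj : st.r j ((toArc m st)^[m] i)) : (toArc m st)^[m] i ≤ j := by
  by_contra h
  push_neg at h
  have hfix : toArc m st ((toArc m st)^[m] i) = (toArc m st)^[m] i :=
    stabilize (toArc_le st) i
  exact toArc_fixed st hfix h hj

lemma ofArc_toArc (st : Setoid (Fin m)) :
    Setoid.ker ((toArc m st)^[m]) = st := by
  apply Setoid.ext
  intro a b
  constructor
  · intro h
    have ha := iter_rel st m a
    have hb := iter_rel st m b
    have h' : ((toArc m st)^[m] a) = ((toArc m st)^[m] b) := h
    exact st.trans (st.symm ha) (h' ▸ hb)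
  · intro h
    have ha := iter_rel st m a
    have hb := iter_rel st m b
    -- both iterates are least elements of the common class
    have hab : st.r ((toArc m st)^[m] a) ((toArc m st)^[m] b) :=
      st.trans ha (st.trans h (st.symm hb))
    have h1 := iter_min st b hab
    have h2 := iter_min st a (st.symm hab)
    exact le_antisymm h2 h1

lemma iter_ker {f : Fin m → Fin m} (hf : ∀ i, f i ≤ i) (i : Fin m) :
    f^[m] (f i) = f^[m] i := by
  have h1 : f^[m+1] i = f^[m] i := by
    rw [Function.iterate_succ_apply']
    exact stabilize hf i
  rw [Function.iterate_succ_apply] at h1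
  exact h1

lemma toArc_ofArc {f : Fin m → Fin m} (hf : ArcOK m f) :
    toArc m (Setoid.ker (f^[m])) = f := by
  classical
  funext i
  have hker : ∀ a b : Fin m, (Setoid.ker (f^[m])).r a b ↔ f^[m] a = f^[m] b := fun a b => Iff.rfl
  rcases lt_or_eq_of_le (hf.1 i) with hlt | heqq
  · -- f i < i : show toArc = f i
    have hmem : (Setoid.ker (f^[m])).r (f i) i := (hker _ _).mpr (iter_ker hf.1 i)
    have hle : f i ≤ toArc m (Setoid.ker (f^[m])) i := toArc_max _ hlt hmem
    have hlt2 : toArc m (Setoid.ker (f^[m])) i < i := toArc_lt _ hlt hmem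
    have hrel : (Setoid.ker (f^[m])).r (toArc m (Setoid.ker (f^[m])) i) i :=
      toArc_rel _ i
    have hge : toArc m (Setoid.ker (f^[m])) i ≤ f i :=
      chain_le hf.1 hf.2 (m + m) m m le_rfl i _ hlt2 ((hker _ _).mp hrel)
    exact le_antisymm hge hle
  · -- f i = i : show filter empty hence toArc = i
    unfold toArc
    rw [dif_neg, heqq]
    rintro ⟨j, hj⟩
    simp only [Finset.mem_filter, Finset.mem_univ, true_and] at hj
    obtain ⟨hji, hrel⟩ := hj
    have h1 : f^[m] j = f^[m] i := hrel
    have h2 : f^[m] i = i := iter_fixed heqq m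
    have h3 : (f^[m] j : ℕ) ≤ j := iter_le hf.1 m j
    rw [h2] at h1
    have : (j : ℕ) < i := hji
    omega
end EquivPart

noncomputable def arcEquiv (m : ℕ) : Setoid (Fin m) ≃ {f : Fin m → Fin m // ArcOK m f} where
  toFun st := ⟨toArc m st, toArc_arcOK st⟩
  invFun f := Setoid.ker (f.1^[m])
  left_inv st := ofArc_toArc st
  right_inv f := Subtype.ext (toArc_ofArc f.2)

/-- No arcs of length one. -/
def NoShort (m : ℕ) (f : Fin m → Fin m) : Prop := ∀ i, f i < i → (f i : ℕ) + 1 < (i : ℕ)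

def shr (m : ℕ) (f : Fin (m+1) → Fin (m+1)) (j : Fin m) : Fin m :=
  if h : (f j.succ : ℕ) < (j : ℕ) then ⟨(f j.succ : ℕ), lt_trans h j.isLt⟩ else j

def gro (m : ℕ) (g : Fin m → Fin m) : Fin (m+1) → Fin (m+1) :=
  Fin.cases 0 (fun j => if _ : g j < j then (g j).castSucc else j.succ)

lemma shr_val {m : ℕ} (f : Fin (m+1) → Fin (m+1)) (j : Fin m) :
    (shr m f j : ℕ) = if (f j.succ : ℕ) < (j : ℕ) then (f j.succ : ℕ) else (j : ℕ) := by
  unfold shr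
  split_ifs <;> rfl

lemma shr_arcOK {m : ℕ} {f : Fin (m+1) → Fin (m+1)} (hf : ArcOK (m+1) f) :
    ArcOK m (shr m f) := by
  have key : ∀ j : Fin m, shr m f j < j →
      ((f j.succ : ℕ) < (j : ℕ) ∧ (shr m f j : ℕ) = (f j.succ : ℕ)) := by
    intro j hj
    unfold shr at hj ⊢
    split_ifs at hj ⊢ with h
    · exact ⟨h, rfl⟩
    · exact absurd hj (lt_irrefl j)
  constructor
  · intro j
    unfold shr
    split_ifs with h
    · exact le_of_lt (by simpa [Fin.lt_def] using h)
    · exact le_refl _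
  · intro i j hi hj heq
    obtain ⟨hi1, hi2⟩ := key i hi
    obtain ⟨hj1, hj2⟩ := key j hj
    have hv : (f i.succ : ℕ) = (f j.succ : ℕ) := by
      rw [← hi2, ← hj2]; exact congrArg Fin.val heq
    have hfe : f i.succ = f j.succ := Fin.ext hv
    have hsi : f i.succ < i.succ := by
      rw [Fin.lt_def, Fin.val_succ]; omega
    have hsj : f j.succ < j.succ := by
      rw [Fin.lt_def, Fin.val_succ]; omega
    have := hf.2 i.succ j.succ hsi hsj hfe
    exact Fin.succ_injective m this

lemma gro_zero {m : ℕ} (g : Fin m → Fin m) : gro m g 0 = 0 := by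
  unfold gro; simp

lemma gro_succ {m : ℕ} (g : Fin m → Fin m) (j : Fin m) :
    gro m g j.succ = if _ : g j < j then (g j).castSucc else j.succ := by
  unfold gro; simp

lemma gro_arcOK {m : ℕ} {g : Fin m → Fin m} (hg : ArcOK m g) :
    ArcOK (m+1) (gro m g) ∧ NoShort (m+1) (gro m g) := by
  have key : ∀ i : Fin (m+1), gro m g i < i →
      ∃ j : Fin m, i = j.succ ∧ g j < j ∧ gro m g i = (g j).castSucc := by
    intro i hi
    induction i using Fin.cases with
    | zero => rw [gro_zero] at hi; exact absurd hi (lt_irrefl 0)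
    | succ j =>
      refine ⟨j, rfl, ?_⟩
      rw [gro_succ] at hi ⊢
      split_ifs at hi ⊢ with h
      · exact ⟨h, rfl⟩
      · exact absurd hi (lt_irrefl _)
  refine ⟨⟨?_, ?_⟩, ?_⟩
  · intro i
    induction i using Fin.cases with
    | zero => rw [gro_zero]
    | succ j =>
      rw [gro_succ]
      split_ifs with h
      · have : (g j : ℕ) ≤ (j : ℕ) := le_of_lt h
        rw [Fin.le_def, Fin.coe_castSucc, Fin.val_succ]; omega
      · exact le_refl _
  · intro i i' hi hi' heq
    obtain ⟨j, rfl, hlt, he⟩ := key i hi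
    obtain ⟨j', rfl, hlt', he'⟩ := key i' hi'
    rw [he, he'] at heq
    have : g j = g j' := Fin.castSucc_injective m heq
    rw [hg.2 j j' hlt hlt' this]
  · intro i hi
    obtain ⟨j, rfl, hlt, he⟩ := key i hi
    rw [he, Fin.coe_castSucc, Fin.val_succ]
    have : (g j : ℕ) < (j : ℕ) := hlt
    omega

lemma gro_shr {m : ℕ} {f : Fin (m+1) → Fin (m+1)} (hf : ArcOK (m+1) f)
    (hns : NoShort (m+1) f) : gro m (shr m f) = f := by
  funext i
  induction i using Fin.cases with
  | zero =>
    rw [gro_zero]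
    exact (Fin.le_zero_iff.mp (hf.1 0)).symm
  | succ j =>
    rw [gro_succ]
    by_cases hc : (f j.succ : ℕ) < (j : ℕ)
    · have h1 : (shr m f j : ℕ) = (f j.succ : ℕ) := by rw [shr_val, if_pos hc]
      have h2 : shr m f j < j := by rw [Fin.lt_def, h1]; exact hc
      rw [dif_pos h2]
      exact Fin.ext (by rw [Fin.coe_castSucc, h1])
    · have h1 : shr m f j = j := Fin.ext (by rw [shr_val, if_neg hc])
      rw [dif_neg (by rw [h1]; exact lt_irrefl j)]
      rcases lt_or_eq_of_le (hf.1 j.succ) with hl | he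
      · have := hns j.succ hl
        rw [Fin.val_succ] at this
        omega
      · exact he.symm

lemma shr_gro {m : ℕ} {g : Fin m → Fin m} (hg : ArcOK m g) :
    shr m (gro m g) = g := by
  funext j
  apply Fin.ext
  rw [shr_val]
  by_cases h : g j < j
  · have h1 : gro m g j.succ = (g j).castSucc := by rw [gro_succ, dif_pos h]
    have h2 : (g j : ℕ) < (j : ℕ) := h
    rw [h1, Fin.coe_castSucc, if_pos h2]
  · have h1 : gro m g j.succ = j.succ := by rw [gro_succ, dif_neg h]
    have h2 : (g j : ℕ) = (j : ℕ) := congrArg Fin.val (le_antisymm (hg.1 j) (not_lt.mp h))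
    rw [h1, Fin.val_succ, if_neg (by omega), h2]

noncomputable def shrinkEquiv (m : ℕ) :
    {f : Fin (m+1) → Fin (m+1) // ArcOK (m+1) f ∧ NoShort (m+1) f} ≃
    {g : Fin m → Fin m // ArcOK m g} where
  toFun f := ⟨shr m f.1, shr_arcOK f.2.1⟩
  invFun g := ⟨gro m g.1, (gro_arcOK g.2).1, (gro_arcOK g.2).2⟩
  left_inv f := Subtype.ext (gro_shr f.2.1 f.2.2)
  right_inv g := Subtype.ext (shr_gro g.2)

lemma cond_iff {m : ℕ} (st : Setoid (Fin (m+1))) :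
    (∀ a b, st.r a b → ¬ (SimpleGraph.pathGraph (m+1)).Adj a b) ↔
    NoShort (m+1) (toArc (m+1) st) := by
  constructor
  · intro h i hi
    have hrel := toArc_rel st i
    have hlt : (toArc (m+1) st i : ℕ) < i := hi
    by_contra hcon
    have heq : (toArc (m+1) st i : ℕ) + 1 = i := by omega
    exact h _ _ hrel (SimpleGraph.pathGraph_adj.mpr (Or.inl heq))
  · intro h a b hr hadj
    rw [SimpleGraph.pathGraph_adj] at hadj
    have key : ∀ a b : Fin (m+1), st.r a b → (a : ℕ) + 1 = (b : ℕ) → False := by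
      intro a b hr hv
      have hab : a < b := by rw [Fin.lt_def]; omega
      have h1 : a ≤ toArc (m+1) st b := toArc_max st hab hr
      have h2 : toArc (m+1) st b < b := toArc_lt st hab hr
      have h3 := h b h2
      have h4 : (a : ℕ) ≤ toArc (m+1) st b := h1
      have h5 : (toArc (m+1) st b : ℕ) < b := h2
      omega
    rcases hadj with hv | hv
    · exact key a b hr hv
    · exact key b a (st.symm hr) hv



/-- The `m`-th Bell number: the number of partitions (equivalence relations) of an
`m`-element set. -/
noncomputable def bell (m : ℕ) : ℕ := Nat.card (Setoid (Fin m))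

/-- The number of partitions of `{1,…,n}` into blocks that are
independent sets of the path graph `P_n` (i.e. no block contains two consecutive
integers) equals the Bell number `B_{n-1}`. -/
theorem path_indep_partitions_eq_bell (n : ℕ) (hn : 1 ≤ n) :
    Nat.card {st : Setoid (Fin n) //
        ∀ a b, st.r a b → ¬ (SimpleGraph.pathGraph n).Adj a b} = bell (n - 1) := by
  obtain ⟨m, rfl⟩ : ∃ m, n = m + 1 := ⟨n - 1, by omega⟩
  simp only [Nat.add_sub_cancel]
  rw [bell]
  apply Nat.card_congr
  exact
    ((arcEquiv (m+1)).subtypeEquiv (fun st => cond_iff st)).trans <|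
      ((Equiv.subtypeSubtypeEquivSubtypeInter (ArcOK (m+1)) (NoShort (m+1)))).trans <|
        (shrinkEquiv m).trans (arcEquiv m).symm
end

section
/- For every integer n ≥ 3, the number of partitions of the vertex set {1,…,n} of the cycle graph C_n into blocks all of which are independent sets of C_n equals Σ_{j=1}^{n−1} (−1)^{n−1−j} B_j, i.e. B_{n−1} − B_{n−2} + B_{n−3} − ⋯ + (−1)^n B_1. -/
namespace CycProof

variable {m : ℕ}

def Hlt (p : Fin m → Option (Fin m)) : Prop := ∀ j i, p j = some i → i < j
def Hinj (p : Fin m → Option (Fin m)) : Prop := ∀ a b i, p a = some i → p b = some i → a = b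

def PredOK (p : Fin m → Option (Fin m)) : Prop := Hlt p ∧ Hinj p

instance : DecidablePred (PredOK (m := m)) := by
  intro p; unfold PredOK Hlt Hinj; infer_instance

def Pred (m : ℕ) := {p : Fin m → Option (Fin m) // PredOK p}

instance : Fintype (Pred m) := by unfold Pred; infer_instance

def root (p : Fin m → Option (Fin m)) (hlt : Hlt p) (j : Fin m) : Fin m :=
  match h : p j with
  | none => j
  | some i => root p hlt i
termination_by j.val
decreasing_by exact hlt _ _ h

variable {p : Fin m → Option (Fin m)} {hlt : Hlt p}

theorem root_none {j : Fin m} (h : p j = none) : root p hlt j = j := by rw [root, h]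

theorem root_step {j i : Fin m} (h : p j = some i) : root p hlt j = root p hlt i := by
  rw [root, h]

theorem root_le (j : Fin m) : root p hlt j ≤ j := by
  cases h : p j with
  | none => rw [root_none h]
  | some i =>
    rw [root_step h]
    exact le_of_lt (lt_of_le_of_lt (root_le i) (hlt _ _ h))
termination_by j.val
decreasing_by exact hlt _ _ h

theorem p_root (j : Fin m) : p (root p hlt j) = none := by
  cases h : p j with
  | none => rw [root_none h]; exact h
  | some i => rw [root_step h]; exact p_root i
termination_by j.val
decreasing_by exact hlt _ _ h

/-- iterate: `iter p k a` is the k-th iterate of `p` from `a`, if defined. -/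
def iter (p : Fin m → Option (Fin m)) : ℕ → Fin m → Option (Fin m)
  | 0, a => some a
  | k+1, a => match p a with
    | none => none
    | some i => iter p k i

def Reaches (p : Fin m → Option (Fin m)) (a b : Fin m) : Prop := ∃ k, iter p k a = some b

theorem reaches_refl (a : Fin m) : Reaches p a a := ⟨0, rfl⟩

theorem reaches_step {a i : Fin m} (h : p a = some i) : Reaches p a i := by
  refine ⟨1, ?_⟩; simp [iter, h]

theorem reaches_cons {a i b : Fin m} (h : p a = some i) (h2 : Reaches p i b) :
    Reaches p a b := by
  obtain ⟨k, hk⟩ := h2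
  exact ⟨k + 1, by simp [iter, h, hk]⟩

theorem reaches_le_aux (hlt : Hlt p) : ∀ (k : ℕ) (a b : Fin m), iter p k a = some b → b ≤ a := by
  intro k
  induction k with
  | zero => intro a b hk; simp [iter] at hk; exact le_of_eq (by rw [hk])
  | succ k ih =>
    intro a b hk
    rw [iter] at hk
    cases h : p a with
    | none => rw [h] at hk; simp at hk
    | some i => rw [h] at hk; exact le_of_lt (lt_of_le_of_lt (ih i b hk) (hlt _ _ h))

theorem reaches_le (hlt : Hlt p) {a b : Fin m} (h : Reaches p a b) : b ≤ a := by
  obtain ⟨k, hk⟩ := h; exact reaches_le_aux hlt k a b hk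

theorem reaches_peel {a b : Fin m} (h : Reaches p a b) (hne : a ≠ b) :
    ∃ i, p a = some i ∧ Reaches p i b := by
  obtain ⟨k, hk⟩ := h
  cases k with
  | zero => simp [iter] at hk; exact absurd hk hne
  | succ k =>
    rw [iter] at hk
    cases h : p a with
    | none => rw [h] at hk; simp at hk
    | some i => rw [h] at hk; exact ⟨i, rfl, k, hk⟩

theorem reaches_root (a : Fin m) : Reaches p a (root p hlt a) := by
  cases h : p a with
  | none => rw [root_none h]; exact reaches_refl a
  | some i => rw [root_step h]; exact reaches_cons h (reaches_root i)
termination_by a.val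
decreasing_by exact hlt _ _ h

theorem reaches_last_aux : ∀ (k : ℕ) (a b : Fin m), iter p k a = some b → a ≠ b →
    ∃ w, Reaches p a w ∧ p w = some b := by
  intro k
  induction k with
  | zero => intro a b hk hne; simp [iter] at hk; exact absurd hk hne
  | succ k ih =>
    intro a b hk hne
    rw [iter] at hk
    cases h : p a with
    | none => rw [h] at hk; simp at hk
    | some i =>
      rw [h] at hk
      by_cases hib : i = b
      · exact ⟨a, reaches_refl a, by rw [h, hib]⟩
      · obtain ⟨w, hw1, hw2⟩ := ih i b hk hib
        exact ⟨w, reaches_cons h hw1, hw2⟩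

theorem reaches_last {a b : Fin m} (h : Reaches p a b) (hne : a ≠ b) :
    ∃ w, Reaches p a w ∧ p w = some b := by
  obtain ⟨k, hk⟩ := h; exact reaches_last_aux k a b hk hne

end CycProof

namespace CycProof
variable {m : ℕ} {p : Fin m → Option (Fin m)}

theorem reaches_compare_aux (hlt : Hlt p) (hinj : Hinj p) :
    ∀ (N : ℕ) (a b x : Fin m), a.val + b.val ≤ N → Reaches p a x → Reaches p b x →
      Reaches p a b ∨ Reaches p b a := by
  intro N
  induction N with
  | zero =>
    intro a b x hab ha hb
    have : a = b := Fin.ext (by omega)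
    subst this
    exact Or.inl (reaches_refl a)
  | succ N ih =>
    intro a b x hab ha hb
    by_cases hax : a = x
    · subst hax; exact Or.inr hb
    by_cases hbx : b = x
    · subst hbx; exact Or.inl ha
    by_cases habe : a = b
    · subst habe; exact Or.inl (reaches_refl a)
    obtain ⟨a', ha1, ha2⟩ := reaches_peel ha hax
    obtain ⟨b', hb1, hb2⟩ := reaches_peel hb hbx
    have hlta : a' < a := hlt _ _ ha1
    have hltb : b' < b := hlt _ _ hb1
    have hsum : a'.val + b'.val ≤ N := by
      rw [Fin.lt_def] at hlta hltb
      omega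
    rcases ih a' b' x hsum ha2 hb2 with h | h
    · by_cases h' : a' = b'
      · exact absurd (hinj a b a' ha1 (by rw [hb1, h'])) habe
      · obtain ⟨w, hw1, hw2⟩ := reaches_last h h'
        have hwb : w = b := hinj w b b' hw2 hb1
        subst hwb
        exact Or.inl (reaches_cons ha1 hw1)
    · by_cases h' : b' = a'
      · exact absurd (hinj a b a' ha1 (by rw [hb1, h'])) habe
      · obtain ⟨w, hw1, hw2⟩ := reaches_last h h'
        have hwa : w = a := hinj w a a' hw2 ha1
        subst hwa
        exact Or.inr (reaches_cons hb1 hw1)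

theorem reaches_compare (hlt : Hlt p) (hinj : Hinj p) {a b x : Fin m}
    (ha : Reaches p a x) (hb : Reaches p b x) : Reaches p a b ∨ Reaches p b a :=
  reaches_compare_aux hlt hinj (a.val + b.val) a b x le_rfl ha hb

/-- If the roots agree, the larger one reaches the smaller. -/
theorem reaches_of_root_eq (hlt : Hlt p) (hinj : Hinj p) {a b : Fin m} (hab : a ≤ b)
    (h : root p hlt a = root p hlt b) : Reaches p b a := by
  rcases reaches_compare hlt hinj (reaches_root a) (h ▸ reaches_root b) with h' | h'
  · have := reaches_le hlt h'
    have : a = b := le_antisymm hab this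
    subst this; exact reaches_refl a
  · exact h'

theorem root_eq_of_reaches_aux (hlt : Hlt p) : ∀ (k : ℕ) (a b : Fin m),
    iter p k a = some b → root p hlt a = root p hlt b := by
  intro k
  induction k with
  | zero => intro a b hk; simp [iter] at hk; rw [hk]
  | succ k ih =>
    intro a b hk
    rw [iter] at hk
    cases h' : p a with
    | none => rw [h'] at hk; simp at hk
    | some i => rw [h'] at hk; rw [root_step h']; exact ih _ _ hk

theorem root_eq_of_reaches (hlt : Hlt p) {a b : Fin m} (h : Reaches p a b) :
    root p hlt a = root p hlt b := by
  obtain ⟨k, hk⟩ := h; exact root_eq_of_reaches_aux hlt k a b hk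

end CycProof

namespace CycProof
variable {m : ℕ} {p : Fin m → Option (Fin m)}

/-- Maximality: if `p j = some i`, no element strictly between `i` and `j` has the
same root as `j`. -/
theorem no_between (hlt : Hlt p) (hinj : Hinj p) {i i' j : Fin m} (h : p j = some i)
    (h1 : i < i') (h2 : i' < j) (h3 : root p hlt i' = root p hlt j) : False := by
  have hr : Reaches p j i' := reaches_of_root_eq hlt hinj (le_of_lt h2) h3
  obtain ⟨c, hc1, hc2⟩ := reaches_peel hr (by intro hh; rw [hh] at h2; exact lt_irrefl _ h2)
  rw [h] at hc1
  have : c = i := by injection hc1.symm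
  subst this
  exact absurd (reaches_le hlt hc2) (not_le.mpr h1)

/-- If roots of `a < b` agree then `p b = some c` with `a ≤ c < b`. -/
theorem step_of_root_eq (hlt : Hlt p) (hinj : Hinj p) {a b : Fin m} (hab : a < b)
    (h : root p hlt a = root p hlt b) : ∃ c, p b = some c ∧ a ≤ c ∧ c < b := by
  have hr : Reaches p b a := reaches_of_root_eq hlt hinj (le_of_lt hab) h
  obtain ⟨c, hc1, hc2⟩ := reaches_peel hr (by intro hh; rw [hh] at hab; exact lt_irrefl _ hab)
  exact ⟨c, hc1, reaches_le hlt hc2, hlt _ _ hc1⟩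

def setoidOf (p : Fin m → Option (Fin m)) (hlt : Hlt p) : Setoid (Fin m) :=
  ⟨fun a b => root p hlt a = root p hlt b, ⟨fun _ => rfl, Eq.symm, Eq.trans⟩⟩

theorem setoidOf_r {hlt : Hlt p} {a b : Fin m} :
    (setoidOf p hlt).r a b ↔ root p hlt a = root p hlt b := Iff.rfl

attribute [local instance] Classical.propDecidable

noncomputable def predOf (st : Setoid (Fin m)) (j : Fin m) : Option (Fin m) :=
  if h : (Finset.univ.filter (fun i => i < j ∧ st.r i j)).Nonempty
  then some ((Finset.univ.filter (fun i => i < j ∧ st.r i j)).max' h)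
  else none

theorem predOf_none_iff {st : Setoid (Fin m)} {j : Fin m} :
    predOf st j = none ↔ ∀ i, i < j → ¬ st.r i j := by
  unfold predOf
  split
  · rename_i h
    simp only [reduceCtorEq, false_iff]
    obtain ⟨i, hi⟩ := h
    simp only [Finset.mem_filter] at hi
    intro hall
    exact hall i hi.2.1 hi.2.2
  · rename_i h
    simp only [true_iff]
    intro i hij hr
    exact h ⟨i, by simp [Finset.mem_filter, hij, hr]⟩

theorem predOf_some {st : Setoid (Fin m)} {j i : Fin m} (h : predOf st j = some i) :
    i < j ∧ st.r i j ∧ ∀ i', i' < j → st.r i' j → i' ≤ i := by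
  unfold predOf at h
  split at h
  · rename_i hne
    have hi : i ∈ Finset.univ.filter (fun i => i < j ∧ st.r i j) := by
      have := Finset.max'_mem _ hne
      rwa [Option.some_inj.mp h] at this
    simp only [Finset.mem_filter] at hi
    refine ⟨hi.2.1, hi.2.2, ?_⟩
    intro i' h1 h2
    have : i' ∈ Finset.univ.filter (fun i => i < j ∧ st.r i j) := by
      simp [Finset.mem_filter, h1, h2]
    calc i' ≤ _ := Finset.le_max' _ _ this
      _ = i := Option.some_inj.mp h
  · simp at h

theorem predOf_hlt (st : Setoid (Fin m)) : Hlt (predOf st) :=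
  fun _ _ h => (predOf_some h).1

theorem predOf_hinj (st : Setoid (Fin m)) : Hinj (predOf st) := by
  intro a b i ha hb
  obtain ⟨ha1, ha2, ha3⟩ := predOf_some ha
  obtain ⟨hb1, hb2, hb3⟩ := predOf_some hb
  by_contra hne
  rcases lt_or_gt_of_ne hne with h | h
  · exact absurd (hb3 a h (st.trans' (st.symm' ha2) hb2)) (not_le.mpr ha1)
  · exact absurd (ha3 b h (st.trans' (st.symm' hb2) ha2)) (not_le.mpr hb1)

end CycProof

namespace CycProof
variable {m : ℕ} {p : Fin m → Option (Fin m)}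

theorem predOf_root_rel (st : Setoid (Fin m)) (j : Fin m) :
    st.r (root (predOf st) (predOf_hlt st) j) j := by
  cases h : predOf st j with
  | none => rw [root_none h]
  | some i =>
    rw [root_step h]
    exact st.trans' (predOf_root_rel st i) (predOf_some h).2.1
termination_by j.val
decreasing_by exact predOf_hlt st _ _ h

theorem setoidOf_predOf (st : Setoid (Fin m)) :
    setoidOf (predOf st) (predOf_hlt st) = st := by
  apply Setoid.ext
  intro a b
  rw [show (setoidOf (predOf st) (predOf_hlt st)).r a b ↔ _ from Iff.rfl]
  constructor
  · intro h
    exact st.trans' (st.symm' (predOf_root_rel st a)) (h ▸ predOf_root_rel st b)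
  · intro h
    set hlt := predOf_hlt st
    have hra := predOf_root_rel st a
    have hrb := predOf_root_rel st b
    have hr : st.r (root (predOf st) hlt a) (root (predOf st) hlt b) :=
      st.trans' hra (st.trans' h (st.symm' hrb))
    rcases lt_trichotomy (root (predOf st) hlt a) (root (predOf st) hlt b) with hc | hc | hc
    · exfalso
      have hn := p_root (hlt := hlt) b
      exact (predOf_none_iff.mp hn) _ hc hr
    · exact hc
    · exfalso
      have hn := p_root (hlt := hlt) a
      exact (predOf_none_iff.mp hn) _ hc (st.symm' hr)

theorem predOf_setoidOf (hlt : Hlt p) (hinj : Hinj p) :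
    predOf (setoidOf p hlt) = p := by
  funext j
  cases h : p j with
  | none =>
    rw [predOf_none_iff]
    intro i hij hr
    rw [setoidOf_r] at hr
    obtain ⟨c, hc, _⟩ := step_of_root_eq hlt hinj hij hr
    rw [h] at hc; simp at hc
  | some i =>
    cases h' : predOf (setoidOf p hlt) j with
    | none =>
      exfalso
      exact (predOf_none_iff.mp h') i (hlt _ _ h) (setoidOf_r.mpr (root_step h).symm)
    | some i' =>
      obtain ⟨h1, h2, h3⟩ := predOf_some h'
      rw [setoidOf_r] at h2
      have hle : i ≤ i' := h3 i (hlt _ _ h) (setoidOf_r.mpr (root_step h).symm)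
      rcases eq_or_lt_of_le hle with he | hlt'
      · rw [he]
      · exact absurd (no_between hlt hinj h hlt' h1 h2) not_false

noncomputable def E (m : ℕ) : Setoid (Fin m) ≃ Pred m where
  toFun st := ⟨predOf st, predOf_hlt st, predOf_hinj st⟩
  invFun P := setoidOf P.1 P.2.1
  left_inv st := setoidOf_predOf st
  right_inv P := Subtype.ext (predOf_setoidOf P.2.1 P.2.2)

noncomputable instance : Fintype (Setoid (Fin m)) := Fintype.ofEquiv _ (E m).symm

def pathS (st : Setoid (Fin m)) : Prop :=
  ∀ (i : ℕ) (h : i + 1 < m), ¬ st.r ⟨i, by omega⟩ ⟨i + 1, h⟩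

def pathP (p : Fin m → Option (Fin m)) : Prop :=
  ∀ (i : ℕ) (h : i + 1 < m), p ⟨i + 1, h⟩ ≠ some ⟨i, by omega⟩

theorem pathS_setoidOf (hlt : Hlt p) (hinj : Hinj p) :
    pathS (setoidOf p hlt) ↔ pathP p := by
  constructor
  · intro hp i h hcon
    exact hp i h (setoidOf_r.mpr (root_step hcon).symm)
  · intro hp i h hcon
    rw [setoidOf_r] at hcon
    obtain ⟨c, hc1, hc2, hc3⟩ := step_of_root_eq hlt hinj (by simp [Fin.lt_def]) hcon
    have : c = ⟨i, by omega⟩ := by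
      apply Fin.ext
      rw [Fin.le_def] at hc2
      rw [Fin.lt_def] at hc3
      simp at hc2 hc3 ⊢
      omega
    rw [this] at hc1
    exact hp i h hc1

theorem pathS_iff_pathP_predOf (st : Setoid (Fin m)) :
    pathS st ↔ pathP (predOf st) := by
  conv_lhs => rw [← setoidOf_predOf st]
  exact pathS_setoidOf (predOf_hlt st) (predOf_hinj st)

end CycProof

namespace CycProof
variable {m : ℕ}

def shr (p : Fin (m + 1) → Option (Fin (m + 1))) : Fin m → Option (Fin m) :=
  fun j => (p j.succ).bind (fun i => if h : i.val < m then some ⟨i.val, h⟩ else none)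

def ext (q : Fin m → Option (Fin m)) : Fin (m + 1) → Option (Fin (m + 1)) :=
  Fin.cases none (fun k => (q k).map Fin.castSucc)

theorem p0_none {p : Fin (m + 1) → Option (Fin (m + 1))} (hlt : Hlt p) : p 0 = none := by
  cases h : p 0 with
  | none => rfl
  | some i =>
    have := hlt _ _ h
    simp [Fin.lt_def] at this

theorem lt_of_some {p : Fin (m + 1) → Option (Fin (m + 1))} (hlt : Hlt p) (hp : pathP p)
    {j : Fin m} {i₀ : Fin (m + 1)} (h : p j.succ = some i₀) : i₀.val < j.val := by
  have h1 : i₀ < j.succ := hlt _ _ h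
  rw [Fin.lt_def, Fin.val_succ] at h1
  have h2 := hp j.val (by omega)
  have hne : i₀.val ≠ j.val := by
    intro he
    apply h2
    have : (⟨j.val + 1, by omega⟩ : Fin (m + 1)) = j.succ := by apply Fin.ext; simp
    rw [this, h]
    congr 1
    exact Fin.ext he
  omega

theorem shr_some {p : Fin (m + 1) → Option (Fin (m + 1))} (hlt : Hlt p) (hp : pathP p)
    {j : Fin m} {i₀ : Fin (m + 1)} (h : p j.succ = some i₀) :
    shr p j = some ⟨i₀.val, by have := lt_of_some hlt hp h; omega⟩ := by
  unfold shr
  rw [h]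
  have hv : i₀.val < m := by have := lt_of_some hlt hp h; omega
  simp [hv]

theorem shr_none {p : Fin (m + 1) → Option (Fin (m + 1))}
    {j : Fin m} (h : p j.succ = none) : shr p j = none := by
  unfold shr; rw [h]; rfl

def shrinkEquiv (m : ℕ) : {P : Pred (m + 1) // pathP P.1} ≃ Pred m where
  toFun := fun ⟨⟨p, hlt, hinj⟩, hpath⟩ => ⟨shr p, by
    constructor
    · intro j i h
      cases hps : p j.succ with
      | none => rw [shr_none hps] at h; simp at h
      | some i₀ =>
        rw [shr_some hlt hpath hps] at h
        have := lt_of_some hlt hpath hps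
        have hi : i.val = i₀.val := by rw [← Option.some_inj.mp h]
        rw [Fin.lt_def]
        omega
    · intro a b i ha hb
      cases hpa : p a.succ with
      | none => rw [shr_none hpa] at ha; simp at ha
      | some ia =>
      cases hpb : p b.succ with
      | none => rw [shr_none hpb] at hb; simp at hb
      | some ib =>
        rw [shr_some hlt hpath hpa] at ha
        rw [shr_some hlt hpath hpb] at hb
        have h1 : ia.val = i.val := by
          have := Option.some_inj.mp ha; rw [← this]
        have h2 : ib.val = i.val := by
          have := Option.some_inj.mp hb; rw [← this]
        have : ia = ib := Fin.ext (by omega)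
        have := hinj _ _ _ hpa (by rw [hpb, this])
        exact Fin.succ_inj.mp this⟩
  invFun := fun ⟨q, hlt, hinj⟩ => ⟨⟨ext q, by
    constructor
    · intro j i h
      induction j using Fin.cases with
      | zero => simp [ext] at h
      | succ k =>
        simp only [ext, Fin.cases_succ] at h
        cases hq : q k with
        | none => rw [hq] at h; simp at h
        | some i₀ =>
          rw [hq] at h
          have : i = i₀.castSucc := (Option.some_inj.mp h).symm
          have hik := hlt _ _ hq
          rw [Fin.lt_def] at hik ⊢
          rw [this]
          simp
          omega
    · intro a b i ha hb
      induction a using Fin.cases with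
      | zero => simp [ext] at ha
      | succ k =>
      induction b using Fin.cases with
      | zero => simp [ext] at hb
      | succ l =>
        simp only [ext, Fin.cases_succ] at ha hb
        cases hqk : q k with
        | none => rw [hqk] at ha; simp at ha
        | some ik =>
        cases hql : q l with
        | none => rw [hql] at hb; simp at hb
        | some il =>
          rw [hqk] at ha; rw [hql] at hb
          have h1 : ik.castSucc = i := Option.some_inj.mp ha
          have h2 : il.castSucc = i := Option.some_inj.mp hb
          have : ik = il := by
            apply Fin.ext
            have := congrArg Fin.val (h1.trans h2.symm)
            simpa using this
          rw [hinj _ _ _ hqk (by rw [hql, this])]⟩, by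
    intro i h hcon
    have hsucc : (⟨i + 1, h⟩ : Fin (m + 1)) = (⟨i, by omega⟩ : Fin m).succ := by
      apply Fin.ext; simp
    rw [hsucc] at hcon
    simp only [ext, Fin.cases_succ] at hcon
    cases hq : q ⟨i, by omega⟩ with
    | none => rw [hq] at hcon; simp at hcon
    | some i₀ =>
      rw [hq] at hcon
      have : i₀.castSucc = ⟨i, by omega⟩ := Option.some_inj.mp hcon
      have hv : i₀.val = i := by
        have := congrArg Fin.val this; simpa using this
      have := hlt _ _ hq
      have hik : i₀.val < i := by simpa [Fin.lt_def] using this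
      omega⟩
  left_inv := by
    rintro ⟨⟨p, hlt, hinj⟩, hpath⟩
    apply Subtype.ext
    apply Subtype.ext
    funext j
    induction j using Fin.cases with
    | zero => exact (p0_none hlt).symm
    | succ k =>
      simp only [ext, Fin.cases_succ]
      cases hps : p k.succ with
      | none => rw [shr_none hps]; rfl
      | some i₀ =>
        rw [shr_some hlt hpath hps]
        simp only [Option.map_some]
        exact congrArg some (Fin.ext rfl)
  right_inv := by
    rintro ⟨q, hlt, hinj⟩
    apply Subtype.ext
    funext j
    show shr (ext q) j = q j
    unfold shr
    have : ext q j.succ = (q j).map Fin.castSucc := by simp [ext]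
    rw [this]
    cases hq : q j with
    | none => rfl
    | some i₀ =>
      simp only [Option.map_some, Option.bind_some]
      have hv : (i₀.castSucc).val < m := by simp [i₀.isLt]
      rw [dif_pos hv]
      exact congrArg some (Fin.ext rfl)

end CycProof

namespace CycProof
variable {m : ℕ}

noncomputable def pathSetoidEquiv (m : ℕ) :
    {st : Setoid (Fin (m + 1)) // pathS st} ≃ Setoid (Fin m) :=
  ((Equiv.subtypeEquiv (E (m + 1)) (fun st => pathS_iff_pathP_predOf st)).trans
    (shrinkEquiv m)).trans (E m).symm

theorem card_pathS (m : ℕ) :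
    Nat.card {st : Setoid (Fin (m + 1)) // pathS st} = bell m := by
  rw [Nat.card_congr (pathSetoidEquiv m)]; rfl

def cycS {k : ℕ} (st : Setoid (Fin k)) : Prop :=
  ∀ a b, st.r a b → ¬ (SimpleGraph.cycleGraph k).Adj a b

theorem cycS_iff_forall {k : ℕ} (st : Setoid (Fin (k + 3))) :
    cycS st ↔ ∀ a : Fin (k + 3), ¬ st.r a (a + 1) := by
  refine ⟨?_, ?_⟩
  · intro h a ha
    refine h a (a + 1) ha ?_
    rw [SimpleGraph.cycleGraph_adj']
    right
    rw [add_sub_cancel_left]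
    simp
  · intro h a b hab hadj
    rw [SimpleGraph.cycleGraph_adj'] at hadj
    rcases hadj with hd | hd
    · have h1 : a - b = 1 := Fin.ext (by rw [hd]; simp)
      have hab' : a = b + 1 := by
        rw [sub_eq_iff_eq_add] at h1; rw [h1]; exact add_comm _ _
      exact h b (hab' ▸ st.symm' hab)
    · have h1 : b - a = 1 := Fin.ext (by rw [hd]; simp)
      have hab' : b = a + 1 := by
        rw [sub_eq_iff_eq_add] at h1; rw [h1]; exact add_comm _ _
      exact h a (hab' ▸ hab)

theorem cycS_iff_pathS {k : ℕ} (st : Setoid (Fin (k + 3))) :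
    cycS st ↔ pathS st ∧ ¬ st.r ⟨k + 2, by omega⟩ ⟨0, by omega⟩ := by
  rw [cycS_iff_forall]
  have hone : (1 : Fin (k + 3)).val = 1 := rfl
  refine ⟨?_, ?_⟩
  · intro h
    constructor
    · intro i hi hcon
      refine h ⟨i, by omega⟩ ?_
      have he : (⟨i, by omega⟩ : Fin (k + 3)) + 1 = ⟨i + 1, hi⟩ := by
        apply Fin.ext
        rw [Fin.add_def]
        simp [hone, Nat.mod_eq_of_lt hi]
      rw [he]
      exact hcon
    · intro hcon
      refine h ⟨k + 2, by omega⟩ ?_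
      have he : (⟨k + 2, by omega⟩ : Fin (k + 3)) + 1 = ⟨0, by omega⟩ := by
        apply Fin.ext
        rw [Fin.add_def]
        simp [hone]
      rw [he]
      exact hcon
  · rintro ⟨h1, h2⟩ a hcon
    by_cases ha : a.val + 1 < k + 3
    · have he : a + 1 = ⟨a.val + 1, ha⟩ := by
        apply Fin.ext
        rw [Fin.add_def]
        simp [hone, Nat.mod_eq_of_lt ha]
      rw [he] at hcon
      exact h1 a.val ha (by
        have he2 : (⟨a.val, by omega⟩ : Fin (k + 3)) = a := Fin.ext rfl
        rw [he2]; exact hcon)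
    · have hav : a.val = k + 2 := by have := a.isLt; omega
      have ha' : a = ⟨k + 2, by omega⟩ := Fin.ext hav
      have he : a + 1 = ⟨0, by omega⟩ := by
        apply Fin.ext
        rw [Fin.add_def]
        simp [hone, hav]
      rw [he] at hcon
      rw [← ha'] at h2
      exact h2 hcon

end CycProof

namespace CycProof

def fdrop (k : ℕ) : Fin (k + 4) → Fin (k + 3) :=
  fun x => if h : x.val < k + 3 then ⟨x.val, h⟩ else ⟨0, by omega⟩

theorem comap_r {α β : Type*} (g : α → β) (r : Setoid β) (x y : α) :
    (Setoid.comap g r).r x y ↔ r.r (g x) (g y) := Iff.rfl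

def splitEquiv (k : ℕ) :
    {st : Setoid (Fin (k + 4)) // pathS st ∧ st.r ⟨k + 3, by omega⟩ ⟨0, by omega⟩} ≃
    {st' : Setoid (Fin (k + 3)) // pathS st' ∧ ¬ st'.r ⟨k + 2, by omega⟩ ⟨0, by omega⟩} where
  toFun := fun ⟨st, h1, h2⟩ => ⟨Setoid.comap Fin.castSucc st, by
    constructor
    · intro i hi hcon
      rw [comap_r] at hcon
      have e1 : (Fin.castSucc ⟨i, by omega⟩ : Fin (k + 4)) = ⟨i, by omega⟩ := Fin.ext rfl
      have e2 : (Fin.castSucc ⟨i + 1, hi⟩ : Fin (k + 4)) = ⟨i + 1, by omega⟩ := Fin.ext rfl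
      rw [e1, e2] at hcon
      exact h1 i (by omega) hcon
    · intro hcon
      rw [comap_r] at hcon
      have e1 : (Fin.castSucc (⟨k + 2, by omega⟩ : Fin (k + 3))) = (⟨k + 2, by omega⟩ : Fin (k + 4)) := Fin.ext rfl
      have e2 : (Fin.castSucc (⟨0, by omega⟩ : Fin (k + 3))) = (⟨0, by omega⟩ : Fin (k + 4)) := Fin.ext rfl
      rw [e1, e2] at hcon
      exact h1 (k + 2) (by omega) (st.trans' hcon (st.symm' h2))⟩
  invFun := fun ⟨st', h1, h2⟩ => ⟨Setoid.comap (fdrop k) st', by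
    refine ⟨?_, ?_⟩
    · intro i hi hcon
      rw [comap_r] at hcon
      by_cases hc : i + 1 < k + 3
      · have e1 : fdrop k ⟨i, by omega⟩ = ⟨i, by omega⟩ := by
          unfold fdrop; rw [dif_pos (by omega : i < k + 3)]
        have e2 : fdrop k ⟨i + 1, hi⟩ = ⟨i + 1, hc⟩ := by
          unfold fdrop; rw [dif_pos]
        rw [e1, e2] at hcon
        exact h1 i hc hcon
      · have hieq : i = k + 2 := by omega
        subst hieq
        have e1 : fdrop k ⟨k + 2, by omega⟩ = ⟨k + 2, by omega⟩ := by
          unfold fdrop; rw [dif_pos (by omega : k + 2 < k + 3)]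
        have e2 : fdrop k ⟨k + 2 + 1, hi⟩ = ⟨0, by omega⟩ := by
          unfold fdrop; rw [dif_neg (show ¬(k + 2 + 1 < k + 3) by omega)]
        rw [e1, e2] at hcon
        exact h2 hcon
    · rw [comap_r]
      have e1 : fdrop k ⟨k + 3, by omega⟩ = ⟨0, by omega⟩ := by
        unfold fdrop; rw [dif_neg (show ¬(k + 3 < k + 3) by omega)]
      have e2 : fdrop k ⟨0, by omega⟩ = ⟨0, by omega⟩ := by
        unfold fdrop; rw [dif_pos (by omega : 0 < k + 3)]
      rw [e1, e2]⟩
  left_inv := by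
    rintro ⟨st, h1, h2⟩
    apply Subtype.ext
    apply Setoid.ext
    intro a b
    show st.r (Fin.castSucc (fdrop k a)) (Fin.castSucc (fdrop k b)) ↔ st.r a b
    have key : ∀ a : Fin (k + 4), st.r (Fin.castSucc (fdrop k a)) a := by
      intro a
      by_cases hc : a.val < k + 3
      · have : Fin.castSucc (fdrop k a) = a := by
          unfold fdrop; rw [dif_pos hc]; exact Fin.ext rfl
        rw [this]
      · have hav : a.val = k + 3 := by have := a.isLt; omega
        have ha : a = ⟨k + 3, Nat.lt_succ_self _⟩ := Fin.ext hav
        subst ha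
        have e : Fin.castSucc (fdrop k ⟨k + 3, Nat.lt_succ_self _⟩) = ⟨0, by omega⟩ := by
          unfold fdrop; rw [dif_neg hc]; exact Fin.ext rfl
        rw [e]
        exact st.symm' h2
    constructor
    · intro h
      exact st.trans' (st.symm' (key a)) (st.trans' h (key b))
    · intro h
      exact st.trans' (key a) (st.trans' h (st.symm' (key b)))
  right_inv := by
    rintro ⟨st', h1, h2⟩
    apply Subtype.ext
    apply Setoid.ext
    intro a b
    show st'.r (fdrop k (Fin.castSucc a)) (fdrop k (Fin.castSucc b)) ↔ st'.r a b
    have key : ∀ a : Fin (k + 3), fdrop k (Fin.castSucc a) = a := by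
      intro a
      unfold fdrop
      rw [dif_pos (by simpa using a.isLt)]
      exact Fin.ext rfl
    rw [key, key]

end CycProof

namespace CycProof

attribute [local instance] Classical.propDecidable

noncomputable instance (k : ℕ) : Fintype (Setoid (Fin k)) := Fintype.ofEquiv _ (E k).symm

theorem bell_eq_card_pred (k : ℕ) : bell k = Nat.card (Pred k) :=
  Nat.card_congr (E k)

theorem card_recurrence (k : ℕ) :
    Nat.card {st : Setoid (Fin (k + 4)) // cycS st} +
      Nat.card {st : Setoid (Fin (k + 3)) // cycS st} = bell (k + 3) := by
  have hpath : Nat.card {st : Setoid (Fin (k + 4)) // pathS st} = bell (k + 3) :=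
    card_pathS (k + 3)
  set Q : Setoid (Fin (k + 4)) → Prop := fun st => st.r ⟨k + 3, by omega⟩ ⟨0, by omega⟩ with hQ
  have hsplit : Nat.card {st : Setoid (Fin (k + 4)) // pathS st} =
      Nat.card {st : Setoid (Fin (k + 4)) // pathS st ∧ ¬ Q st} +
      Nat.card {st : Setoid (Fin (k + 4)) // pathS st ∧ Q st} := by
    have e1 : {st : Setoid (Fin (k + 4)) // pathS st} ≃
        {s : {st : Setoid (Fin (k + 4)) // pathS st} // ¬ Q s.1} ⊕
        {s : {st : Setoid (Fin (k + 4)) // pathS st} // Q s.1} :=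
      ((Equiv.sumCompl (fun s : {st : Setoid (Fin (k + 4)) // pathS st} => Q s.1)).symm.trans
        (Equiv.sumComm _ _))
    rw [Nat.card_congr e1, Nat.card_sum]
    congr 1
    · exact Nat.card_congr (Equiv.subtypeSubtypeEquivSubtypeInter pathS (fun st => ¬ Q st))
    · exact Nat.card_congr (Equiv.subtypeSubtypeEquivSubtypeInter pathS Q)
  have e2 : {st : Setoid (Fin (k + 4)) // pathS st ∧ ¬ Q st} ≃
      {st : Setoid (Fin (k + 4)) // cycS st} :=
    (Equiv.subtypeEquivRight (fun st => (cycS_iff_pathS (k := k + 1) st).symm))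
  have e3 : {st : Setoid (Fin (k + 4)) // pathS st ∧ Q st} ≃
      {st : Setoid (Fin (k + 3)) // cycS st} :=
    (splitEquiv k).trans (Equiv.subtypeEquivRight (fun st => (cycS_iff_pathS (k := k) st).symm))
  rw [← hpath, hsplit, Nat.card_congr e2, Nat.card_congr e3]

theorem card_base : Nat.card {st : Setoid (Fin 3) // cycS st} = 1 := by
  have hadj : ∀ a b : Fin 3, a ≠ b → (SimpleGraph.cycleGraph 3).Adj a b := by decide
  have key : ∀ st : Setoid (Fin 3), cycS st → ∀ a b, (st.r a b ↔ a = b) := by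
    intro st hst a b
    constructor
    · intro h
      by_contra hne
      exact hst a b h (hadj a b hne)
    · rintro rfl
      exact st.refl a
  rw [Nat.card_eq_one_iff_unique]
  constructor
  · constructor
    intro ⟨s, hs⟩ ⟨t, ht⟩
    apply Subtype.ext
    apply Setoid.ext
    intro a b
    rw [key s hs, key t ht]
  · refine ⟨⟨⟨Eq, eq_equivalence⟩, ?_⟩⟩
    intro a b hab hadj'
    rw [show (⟨Eq, eq_equivalence⟩ : Setoid (Fin 3)).r a b ↔ a = b from Iff.rfl] at hab
    subst hab
    exact (SimpleGraph.cycleGraph 3).loopless.irrefl a hadj'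

theorem bell_one : bell 1 = 1 := by
  rw [bell_eq_card_pred, Nat.card_eq_fintype_card]
  decide

theorem bell_two : bell 2 = 2 := by
  rw [bell_eq_card_pred, Nat.card_eq_fintype_card]
  decide

end CycProof

namespace CycProof

theorem main : ∀ n : ℕ, 3 ≤ n →
    (Nat.card {st : Setoid (Fin n) // cycS st} : ℤ) =
      ∑ j ∈ Finset.Icc 1 (n - 1), (-1 : ℤ) ^ (n - 1 - j) * (bell j : ℤ) := by
  intro n hn
  induction n, hn using Nat.le_induction with
  | base =>
    rw [card_base]
    rw [show (3 : ℕ) - 1 = 2 from rfl]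
    rw [Finset.sum_Icc_succ_top (by norm_num : (1:ℕ) ≤ 2)]
    rw [Finset.Icc_self, Finset.sum_singleton]
    norm_num [bell_one, bell_two]
  | succ n hn ih =>
    obtain ⟨k, rfl⟩ : ∃ k, n = k + 3 := ⟨n - 3, by omega⟩
    have hrec := card_recurrence k
    have hrec' : (Nat.card {st : Setoid (Fin (k + 4)) // cycS st} : ℤ) =
        (bell (k + 3) : ℤ) - (Nat.card {st : Setoid (Fin (k + 3)) // cycS st} : ℤ) := by
      have := congrArg (fun x : ℕ => (x : ℤ)) hrec
      push_cast at this
      linarith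
    have hin : (Nat.card {st : Setoid (Fin (k + 3)) // cycS st} : ℤ) =
        ∑ j ∈ Finset.Icc 1 (k + 2), (-1 : ℤ) ^ (k + 2 - j) * (bell j : ℤ) := by
      rw [ih]
      rfl
    rw [show k + 3 + 1 = k + 4 from rfl, show k + 4 - 1 = k + 3 from rfl]
    rw [hrec', hin]
    rw [Finset.sum_Icc_succ_top (by omega : (1:ℕ) ≤ k + 3)]
    rw [show k + 3 - (k + 3) = 0 from by omega]
    have hcong : ∑ j ∈ Finset.Icc 1 (k + 2), (-1 : ℤ) ^ (k + 3 - j) * (bell j : ℤ) =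
        ∑ j ∈ Finset.Icc 1 (k + 2), -((-1 : ℤ) ^ (k + 2 - j) * (bell j : ℤ)) := by
      apply Finset.sum_congr rfl
      intro j hj
      rw [Finset.mem_Icc] at hj
      rw [show k + 3 - j = (k + 2 - j) + 1 from by omega, pow_succ]
      ring
    rw [hcong, Finset.sum_neg_distrib]
    ring

end CycProof


/-- For `n ≥ 3`, the number of partitions of the vertex set of the cycle
graph `C_n` into independent sets equals the alternating sum
`B_{n-1} - B_{n-2} + ⋯ + (-1)^n B_1`. -/
theorem cycle_indep_partitions_eq_alternating_bell (n : ℕ) (hn : 3 ≤ n) :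
    (Nat.card {st : Setoid (Fin n) //
        ∀ a b, st.r a b → ¬ (SimpleGraph.cycleGraph n).Adj a b} : ℤ) =
      ∑ j ∈ Finset.Icc 1 (n - 1), (-1 : ℤ) ^ (n - 1 - j) * (bell j : ℤ) := by
  exact CycProof.main n hn
end
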